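/- arXiv:2107.09945 — 7 statements merged into one kernel-verified Lean document; each statement's English description precedes it below -/
import Mathlib

section
/- For every nonzero ordinal θ, the level 𝒟_θ of the Hausdorff difference hierarchy on C^ω equals the level Λ_θ of the fine Hausdorff hierarchy on C^ω. -/
open Set Topology

noncomputable section

def seqTop (C : Type) : TopologicalSpace (ℕ → C) :=
  @Pi.topologicalSpace ℕ (fun _ => C) (fun _ => ⊥)

def pref {C : Type} (ρ : ℕ → C) (n : ℕ) : List C :=
  (List.range n).map ρ

def OrdEven (θ : Ordinal) : Prop :=
  ∃ (lam : Ordinal) (k : ℕ), (lam = 0 ∨ Order.IsSuccLimit lam) ∧ θ = lam + 2 * (k : Ordinal)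

def HDiffSet {C : Type} (θ : Ordinal) (O : Ordinal → Set (ℕ → C)) : Set (ℕ → C) :=
  {ρ | (∃ η < θ, ρ ∈ O η) ∧ (OrdEven (sInf {η | η < θ ∧ ρ ∈ O η}) ↔ ¬ OrdEven θ)}

def Dclass (C : Type) (θ : Ordinal) : Set (Set (ℕ → C)) :=
  {S | ∃ O : Ordinal → Set (ℕ → C),
      (∀ η < θ, IsOpen[seqTop C] (O η)) ∧
      (∀ η₁ η₂, η₁ ≤ η₂ → η₂ < θ → O η₁ ⊆ O η₂) ∧
      S = HDiffSet θ O}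

def FineLambda (C : Type) : Ordinal → Set (Set (ℕ → C))
  | θ =>
    if θ = 1 then {S | IsOpen[seqTop C] S}
    else if 1 < θ then
      {S | ∃ (I : Type) (T O : I → Set (ℕ → C)) (η : I → {x : Ordinal // x < θ}),
        (∀ i, IsOpen[seqTop C] (O i)) ∧ (Pairwise fun i j => Disjoint (O i) (O j)) ∧
        (∀ i, T i ⊆ O i) ∧ S = ⋃ i, T i ∧
        ∀ i, T i ∈ FineLambda C (η i) ∨ (T i)ᶜ ∈ FineLambda C (η i)}
    else ∅
termination_by θ => θ
decreasing_by all_goals exact (η i).2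

def FineK (C : Type) (θ : Ordinal) : Set (Set (ℕ → C)) :=
  {S | Sᶜ ∈ FineLambda C θ}

lemma ordEven_zero : OrdEven 0 := ⟨0, 0, Or.inl rfl, by simp⟩

lemma natpart_lt (θ : Ordinal) : ∃ n : ℕ, θ % Ordinal.omega0 = n :=
  Ordinal.lt_omega0.1 (Ordinal.mod_lt θ Ordinal.omega0_ne_zero)

lemma ordEven_iff (θ : Ordinal) : OrdEven θ ↔ ∃ k : ℕ, θ % Ordinal.omega0 = 2 * (k : Ordinal) := by
  constructor
  · rintro ⟨lam, k, hlam, rfl⟩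
    have hdvd : Ordinal.omega0 ∣ lam := by
      rcases hlam with h | h
      · simp [h]
      · exact (Ordinal.isSuccLimit_iff_omega0_dvd.1 h).2
    obtain ⟨q, rfl⟩ := hdvd
    refine ⟨k, ?_⟩
    rw [Ordinal.mul_add_mod_self]
    exact Ordinal.mod_eq_of_lt (by
      have : (2 * (k:Ordinal)) < Ordinal.omega0 := by
        have : ((2 * k : ℕ) : Ordinal) < Ordinal.omega0 := Ordinal.nat_lt_omega0 _
        simpa using this
      exact this)
  · rintro ⟨k, hk⟩
    refine ⟨Ordinal.omega0 * (θ / Ordinal.omega0), k, ?_, ?_⟩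
    · rcases eq_or_ne (θ / Ordinal.omega0) 0 with h | h
      · simp [h]
      · exact Or.inr (Ordinal.isSuccLimit_mul_left Ordinal.isSuccLimit_omega0 (pos_iff_ne_zero.2 h))
    · rw [← hk, Ordinal.div_add_mod]

lemma ordEven_succ (θ : Ordinal) : OrdEven (θ + 1) ↔ ¬ OrdEven θ := by
  obtain ⟨n, hn⟩ := natpart_lt θ
  have hsucc : (θ + 1) % Ordinal.omega0 = ((n + 1 : ℕ) : Ordinal) := by
    conv_lhs => rw [← Ordinal.div_add_mod θ Ordinal.omega0]
    rw [hn, add_assoc]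
    have : ((n : Ordinal) + 1) = ((n+1 : ℕ) : Ordinal) := by simp
    rw [this, Ordinal.mul_add_mod_self]
    exact Ordinal.mod_eq_of_lt (Ordinal.nat_lt_omega0 _)
  have cast2 : ∀ m k : ℕ, ((m : Ordinal) = 2 * (k : Ordinal)) ↔ m = 2 * k := by
    intro m k
    constructor
    · intro h; exact_mod_cast (by simpa using h : ((m:Ordinal) = ((2*k : ℕ) : Ordinal)))
    · intro h; subst h; push_cast; ring_nf
  rw [ordEven_iff, ordEven_iff, hsucc, hn]
  constructor
  · rintro ⟨k, hk⟩ ⟨k', hk'⟩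
    rw [cast2] at hk hk'
    omega
  · intro h
    have hne : ∀ k : ℕ, n ≠ 2 * k := by
      intro k hk
      exact h ⟨k, by rw [cast2]; exact hk⟩
    have : Odd n := Nat.odd_iff.2 (by
      rcases Nat.even_or_odd n with he | ho
      · obtain ⟨m, hm⟩ := he; exact absurd (by omega : n = 2*m) (hne m)
      · exact Nat.odd_iff.1 ho)
    obtain ⟨m, hm⟩ := this
    exact ⟨m+1, by rw [cast2]; omega⟩
lemma sInf_eq_of_least {A : Set Ordinal} {η : Ordinal} (h1 : η ∈ A)
    (h2 : ∀ μ < η, μ ∉ A) : sInf A = η := by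
  have hle : sInf A ≤ η := csInf_le' h1
  rcases lt_or_eq_of_le hle with h | h
  · exact absurd (csInf_mem ⟨η, h1⟩) (h2 _ h)
  · exact h

variable {C : Type}

lemma mem_HDiffSet {θ : Ordinal} {O : Ordinal → Set (ℕ → C)} {ρ : ℕ → C} {l : Ordinal}
    (h1 : l < θ) (h2 : ρ ∈ O l) (h3 : ∀ μ < l, ¬(μ < θ ∧ ρ ∈ O μ)) :
    ρ ∈ HDiffSet θ O ↔ (OrdEven l ↔ ¬ OrdEven θ) := by
  have : sInf {η | η < θ ∧ ρ ∈ O η} = l := sInf_eq_of_least ⟨h1, h2⟩ h3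
  simp only [HDiffSet, mem_setOf_eq, this]
  exact ⟨fun h => h.2, fun h => ⟨⟨l, h1, h2⟩, h⟩⟩

lemma not_mem_HDiffSet {θ : Ordinal} {O : Ordinal → Set (ℕ → C)} {ρ : ℕ → C}
    (h : ¬ ∃ η < θ, ρ ∈ O η) : ρ ∉ HDiffSet θ O := fun hc => h hc.1

lemma exists_least {θ : Ordinal} {O : Ordinal → Set (ℕ → C)} {ρ : ℕ → C}
    (hI : ∃ η < θ, ρ ∈ O η) :
    ∃ l, l < θ ∧ ρ ∈ O l ∧ ∀ μ < l, ¬(μ < θ ∧ ρ ∈ O μ) := by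
  obtain ⟨η₀, hη₀, hmem₀⟩ := hI
  obtain ⟨l, hl, hmin⟩ := Ordinal.lt_wf.has_min {η | η < θ ∧ ρ ∈ O η} ⟨η₀, hη₀, hmem₀⟩
  exact ⟨l, hl.1, hl.2, fun μ hμ hc => hmin μ hc hμ⟩

-- localization
lemma HDiffSet_inter (θ : Ordinal) (O : Ordinal → Set (ℕ → C)) (V : Set (ℕ → C)) :
    HDiffSet θ (fun η => O η ∩ V) = HDiffSet θ O ∩ V := by
  ext ρ
  by_cases hV : ρ ∈ V
  · by_cases hI : ∃ η < θ, ρ ∈ O η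
    · obtain ⟨l, hlθ, hlO, hmin⟩ := exists_least hI
      rw [mem_inter_iff, mem_HDiffSet hlθ hlO hmin,
          mem_HDiffSet (O := fun η => O η ∩ V) (l := l) hlθ ⟨hlO, hV⟩
            (fun μ hμ hc => hmin μ hμ ⟨hc.1, hc.2.1⟩)]
      tauto
    · have hI' : ¬ ∃ η < θ, ρ ∈ O η ∩ V := fun ⟨η, hη, hm⟩ => hI ⟨η, hη, hm.1⟩
      simp only [mem_inter_iff]
      exact ⟨fun hc => absurd hc (not_mem_HDiffSet hI'),
             fun hc => absurd hc.1 (not_mem_HDiffSet hI)⟩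
  · have hI' : ¬ ∃ η < θ, ρ ∈ O η ∩ V := fun ⟨η, hη, hm⟩ => hV hm.2
    simp only [mem_inter_iff]
    exact ⟨fun hc => absurd hc (not_mem_HDiffSet hI'), fun hc => absurd hc.2 hV⟩

-- padding
lemma HDiffSet_pad {θ θ' : Ordinal} (hle : θ ≤ θ') (hpar : OrdEven θ ↔ OrdEven θ')
    (O : Ordinal → Set (ℕ → C)) :
    HDiffSet θ' (fun η => if η < θ then O η else ⋃ μ, ⋃ (_ : μ < θ), O μ) = HDiffSet θ O := by
  set P : Ordinal → Set (ℕ → C) := fun η => if η < θ then O η else ⋃ μ, ⋃ (_ : μ < θ), O μ with hP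
  ext ρ
  by_cases hI : ∃ η < θ, ρ ∈ O η
  · obtain ⟨l, hlθ, hlO, hmin⟩ := exists_least hI
    have hPl : ρ ∈ P l := by simp only [hP, if_pos hlθ]; exact hlO
    rw [mem_HDiffSet hlθ hlO hmin,
        mem_HDiffSet (O := P) (l := l) (lt_of_lt_of_le hlθ hle) hPl
          (fun μ hμ hc => by
            by_cases h : μ < θ
            · exact hmin μ hμ ⟨h, by simpa only [hP, if_pos h] using hc.2⟩
            · exact h (hμ.trans hlθ))]
    tauto
  · have hI' : ¬ ∃ η < θ', ρ ∈ P η := by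
      rintro ⟨η, hη, hmem⟩
      by_cases h : η < θ
      · exact hI ⟨η, h, by simpa only [hP, if_pos h] using hmem⟩
      · simp only [hP, if_neg h, mem_iUnion] at hmem
        obtain ⟨μ, hμ, hmem⟩ := hmem
        exact hI ⟨μ, hμ, hmem⟩
    exact ⟨fun hc => absurd hc (not_mem_HDiffSet hI'),
           fun hc => absurd hc (not_mem_HDiffSet hI)⟩

-- flip
lemma HDiffSet_flip (θ : Ordinal) (O : Ordinal → Set (ℕ → C)) :
    HDiffSet (θ + 1) (fun η => ⋃ μ, ⋃ (_ : μ + 1 ≤ η ∧ μ < θ), O μ) = HDiffSet θ O := by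
  set R : Ordinal → Set (ℕ → C) := fun η => ⋃ μ, ⋃ (_ : μ + 1 ≤ η ∧ μ < θ), O μ with hR
  have hmemR : ∀ (ρ : ℕ → C) η, ρ ∈ R η ↔ ∃ μ, (μ + 1 ≤ η ∧ μ < θ) ∧ ρ ∈ O μ := by
    intro ρ η; simp [hR]
  ext ρ
  by_cases hI : ∃ η < θ, ρ ∈ O η
  · obtain ⟨l, hlθ, hlO, hmin⟩ := exists_least hI
    rw [mem_HDiffSet hlθ hlO hmin,
        mem_HDiffSet (O := R) (l := l + 1)
          (by rw [Ordinal.add_one_eq_succ, Ordinal.add_one_eq_succ]; exact Order.succ_lt_succ hlθ)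
          ((hmemR ρ (l+1)).2 ⟨l, ⟨le_refl _, hlθ⟩, hlO⟩)
          (fun μ' hμ' hc => by
            obtain ⟨μ, ⟨hμ1, hμθ⟩, hμO⟩ := (hmemR ρ μ').1 hc.2
            have : μ < l := by
              have h1 : μ' ≤ l := by
                rw [Ordinal.add_one_eq_succ] at hμ'; exact Order.lt_succ_iff.1 hμ'
              have h2 : μ + 1 ≤ l := le_trans hμ1 h1
              rw [Ordinal.add_one_eq_succ, Order.succ_le_iff] at h2; exact h2
            exact hmin μ this ⟨hμθ, hμO⟩)]
    rw [ordEven_succ, ordEven_succ]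
    tauto
  · have hI' : ¬ ∃ η < θ + 1, ρ ∈ R η := by
      rintro ⟨η, hη, hmem⟩
      obtain ⟨μ, ⟨_, hμθ⟩, hμO⟩ := (hmemR ρ η).1 hmem
      exact hI ⟨μ, hμθ, hμO⟩
    exact ⟨fun hc => absurd hc (not_mem_HDiffSet hI'),
           fun hc => absurd hc (not_mem_HDiffSet hI)⟩

-- complement within V
lemma HDiffSet_compl {θ : Ordinal} (O : Ordinal → Set (ℕ → C)) (V : Set (ℕ → C))
    (hsub : ∀ η < θ, O η ⊆ V) :
    HDiffSet (θ + 1) (fun η => if η < θ then O η else V) = V \ HDiffSet θ O := by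
  set R : Ordinal → Set (ℕ → C) := fun η => if η < θ then O η else V with hR
  have hθθ1 : θ < θ + 1 := by
    rw [Ordinal.add_one_eq_succ]; exact Order.lt_succ θ
  ext ρ
  by_cases hV : ρ ∈ V
  · by_cases hI : ∃ η < θ, ρ ∈ O η
    · obtain ⟨l, hlθ, hlO, hmin⟩ := exists_least hI
      have hRl : ρ ∈ R l := by simp only [hR, if_pos hlθ]; exact hlO
      rw [mem_diff, mem_HDiffSet hlθ hlO hmin,
          mem_HDiffSet (O := R) (l := l) (hlθ.trans hθθ1) hRl
            (fun μ hμ hc => by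
              by_cases h : μ < θ
              · exact hmin μ hμ ⟨h, by simpa only [hR, if_pos h] using hc.2⟩
              · exact h (hμ.trans hlθ)),
          ordEven_succ]
      constructor
      · intro h; refine ⟨hV, ?_⟩; tauto
      · rintro ⟨-, h⟩; tauto
    · have hRθ : ρ ∈ R θ := by simp only [hR, if_neg (lt_irrefl θ)]; exact hV
      rw [mem_diff,
          mem_HDiffSet (O := R) (l := θ) hθθ1 hRθ
            (fun μ hμ hc => hI ⟨μ, hμ, by simpa only [hR, if_pos hμ] using hc.2⟩),
          ordEven_succ]
      constructor
      · intro _; exact ⟨hV, not_mem_HDiffSet hI⟩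
      · intro _; tauto
  · have hI' : ¬ ∃ η < θ + 1, ρ ∈ R η := by
      rintro ⟨η, hη, hmem⟩
      by_cases h : η < θ
      · exact hV (hsub η h (by simpa only [hR, if_pos h] using hmem))
      · exact hV (by simpa only [hR, if_neg h] using hmem)
    exact ⟨fun hc => absurd hc (not_mem_HDiffSet hI'), fun hc => absurd hc.1 hV⟩

-- assembly over pairwise disjoint envelopes
lemma HDiffSet_iUnion {θ : Ordinal} {ι : Type} (Env : ι → Set (ℕ → C))
    (Q : ι → Ordinal → Set (ℕ → C))
    (hdisj : Pairwise fun i j => Disjoint (Env i) (Env j))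
    (hsub : ∀ i, ∀ η < θ, Q i η ⊆ Env i) :
    HDiffSet θ (fun η => ⋃ i, Q i η) = ⋃ i, HDiffSet θ (Q i) := by
  ext ρ
  by_cases hI : ∃ i, ∃ η < θ, ρ ∈ Q i η
  · obtain ⟨i, hIi⟩ := hI
    obtain ⟨ηi, hηi, hρi⟩ := hIi
    have hρE : ρ ∈ Env i := hsub i ηi hηi hρi
    have honly : ∀ j, j ≠ i → ∀ η < θ, ρ ∉ Q j η := by
      intro j hj η hη hc
      exact (hdisj hj).ne_of_mem (hsub j η hη hc) hρE rfl
    have hsets : ∀ η, η < θ → (ρ ∈ (⋃ j, Q j η) ↔ ρ ∈ Q i η) := by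
      intro η hη
      simp only [mem_iUnion]
      constructor
      · rintro ⟨j, hj⟩
        rcases eq_or_ne j i with rfl | hne
        · exact hj
        · exact absurd hj (honly j hne η hη)
      · exact fun h => ⟨i, h⟩
    have hIQ : ∃ η < θ, ρ ∈ Q i η := ⟨ηi, hηi, hρi⟩
    obtain ⟨l, hlθ, hlO, hmin⟩ := exists_least hIQ
    have h1 : ρ ∈ HDiffSet θ (fun η => ⋃ j, Q j η) ↔ (OrdEven l ↔ ¬ OrdEven θ) :=
      mem_HDiffSet hlθ ((hsets l hlθ).2 hlO)
        (fun μ hμ hc => hmin μ hμ ⟨hc.1, (hsets μ hc.1).1 hc.2⟩)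
    have h2 : ρ ∈ HDiffSet θ (Q i) ↔ (OrdEven l ↔ ¬ OrdEven θ) := mem_HDiffSet hlθ hlO hmin
    rw [h1, mem_iUnion]
    constructor
    · intro h; exact ⟨i, h2.2 h⟩
    · rintro ⟨j, hj⟩
      rcases eq_or_ne j i with rfl | hne
      · exact h2.1 hj
      · obtain ⟨⟨η, hη, hmem⟩, -⟩ := hj
        exact absurd hmem (honly j hne η hη)
  · push_neg at hI
    have h1 : ¬ ∃ η < θ, ρ ∈ ⋃ j, Q j η := by
      rintro ⟨η, hη, hmem⟩
      rw [mem_iUnion] at hmem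
      obtain ⟨j, hj⟩ := hmem
      exact hI j η hη hj
    rw [mem_iUnion]
    constructor
    · intro hc; exact absurd hc (not_mem_HDiffSet h1)
    · rintro ⟨j, hj⟩
      exact absurd hj (not_mem_HDiffSet (by push_neg; exact hI j))

lemma HDiffSet_congr {θ : Ordinal} {O O' : Ordinal → Set (ℕ → C)}
    (h : ∀ η < θ, O η = O' η) : HDiffSet θ O = HDiffSet θ O' := by
  ext ρ
  have hset : {η | η < θ ∧ ρ ∈ O η} = {η | η < θ ∧ ρ ∈ O' η} := by
    ext η
    exact ⟨fun ⟨h1, h2⟩ => ⟨h1, (h η h1) ▸ h2⟩, fun ⟨h1, h2⟩ => ⟨h1, (h η h1).symm ▸ h2⟩⟩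
  simp only [HDiffSet, mem_setOf_eq]
  rw [show (∃ η < θ, ρ ∈ O η) ↔ (∃ η < θ, ρ ∈ O' η) by
        constructor
        · rintro ⟨η, h1, h2⟩; exact ⟨η, h1, (h η h1) ▸ h2⟩
        · rintro ⟨η, h1, h2⟩; exact ⟨η, h1, (h η h1).symm ▸ h2⟩,
      hset]

lemma not_ordEven_one : ¬ OrdEven (1 : Ordinal) := fun h =>
  (ordEven_succ 0).1 (by rwa [zero_add]) ordEven_zero

lemma HDiffSet_one (O : Ordinal → Set (ℕ → C)) : HDiffSet 1 O = O 0 := by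
  ext ρ
  by_cases h : ρ ∈ O 0
  · rw [mem_HDiffSet (l := 0) zero_lt_one h (fun μ hμ => absurd hμ (not_lt.2 (zero_le (a := μ))))]
    have : OrdEven (0:Ordinal) ↔ ¬ OrdEven (1:Ordinal) :=
      ⟨fun _ => not_ordEven_one, fun _ => ordEven_zero⟩
    simp [h]
    exact this
  · have : ¬ ∃ η < (1 : Ordinal), ρ ∈ O η := by
      rintro ⟨η, hη, hmem⟩
      rw [Ordinal.lt_one_iff_zero] at hη
      exact h (hη ▸ hmem)
    exact ⟨fun hc => absurd hc (not_mem_HDiffSet this), fun hc => absurd hc h⟩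

-- C6 : adding the outside of U at index i₀
lemma HDiffSet_outside {θ i₀ : Ordinal} (hi₀θ : i₀ < θ) (hi₀ : OrdEven i₀ ↔ ¬ OrdEven θ)
    (O : Ordinal → Set (ℕ → C)) (U : Set (ℕ → C)) (hsub : ∀ η < θ, O η ⊆ U) :
    HDiffSet θ (fun η => if i₀ ≤ η then O η ∪ Uᶜ else O η) = Uᶜ ∪ HDiffSet θ O := by
  set R : Ordinal → Set (ℕ → C) := fun η => if i₀ ≤ η then O η ∪ Uᶜ else O η with hR
  ext ρ
  by_cases hU : ρ ∈ U
  · have hsets : ∀ η, η < θ → (ρ ∈ R η ↔ ρ ∈ O η) := by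
      intro η hη
      by_cases h : i₀ ≤ η
      · simp only [hR, if_pos h, mem_union]
        exact ⟨fun hc => hc.elim id (fun hc' => absurd hU hc'), Or.inl⟩
      · simp only [hR, if_neg h]
    by_cases hI : ∃ η < θ, ρ ∈ O η
    · obtain ⟨l, hlθ, hlO, hmin⟩ := exists_least hI
      rw [mem_union,
          mem_HDiffSet hlθ hlO hmin,
          mem_HDiffSet (O := R) (l := l) hlθ ((hsets l hlθ).2 hlO)
            (fun μ hμ hc => hmin μ hμ ⟨hc.1, (hsets μ hc.1).1 hc.2⟩)]
      have : ρ ∉ Uᶜ := fun hc => hc hU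
      tauto
    · have hI' : ¬ ∃ η < θ, ρ ∈ R η := by
        rintro ⟨η, hη, hmem⟩
        exact hI ⟨η, hη, (hsets η hη).1 hmem⟩
      rw [mem_union]
      have : ρ ∉ Uᶜ := fun hc => hc hU
      exact ⟨fun hc => absurd hc (not_mem_HDiffSet hI'),
             fun hc => absurd (hc.resolve_left this) (not_mem_HDiffSet hI)⟩
  · have hρO : ∀ η, η < θ → ρ ∉ O η := fun η hη hc => hU (hsub η hη hc)
    have hRi₀ : ρ ∈ R i₀ := by
      simp only [hR, if_pos (le_refl i₀), mem_union, mem_compl_iff]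
      exact Or.inr hU
    rw [mem_union,
        mem_HDiffSet (O := R) (l := i₀) hi₀θ hRi₀
          (fun μ hμ hc => by
            have : ρ ∈ R μ := hc.2
            simp only [hR, if_neg (not_le.2 hμ)] at this
            exact hρO μ hc.1 this)]
    have h1 : ρ ∈ Uᶜ := hU
    have h2 : ρ ∉ HDiffSet θ O := not_mem_HDiffSet (by rintro ⟨η, hη, hm⟩; exact hρO η hη hm)
    tauto

-- C7 : truncation
lemma HDiffSet_trunc {θ ζ ζ' : Ordinal} (hζθ : ζ < θ) (hζζ' : ζ < ζ') (hζ'θ : ζ' ≤ θ)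
    (hpar : OrdEven ζ' ↔ OrdEven θ) (O : Ordinal → Set (ℕ → C))
    (habs : ∀ η < θ, O η ⊆ O ζ) : HDiffSet ζ' O = HDiffSet θ O := by
  ext ρ
  by_cases hI : ∃ η < θ, ρ ∈ O η
  · have hζmem : ρ ∈ O ζ := by
      obtain ⟨η, hη, hmem⟩ := hI
      exact habs η hη hmem
    obtain ⟨l, hlθ, hlO, hmin⟩ := exists_least hI
    have hlζ : l ≤ ζ := by
      by_contra h
      exact hmin ζ (not_le.1 h) ⟨hζθ, hζmem⟩
    have hlζ' : l < ζ' := lt_of_le_of_lt hlζ hζζ'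
    rw [mem_HDiffSet hlθ hlO hmin,
        mem_HDiffSet (θ := ζ') hlζ' hlO
          (fun μ hμ hc => hmin μ hμ ⟨lt_of_lt_of_le hc.1 hζ'θ, hc.2⟩)]
    tauto
  · have hI' : ¬ ∃ η < ζ', ρ ∈ O η := by
      rintro ⟨η, hη, hmem⟩
      exact hI ⟨η, lt_of_lt_of_le hη hζ'θ, hmem⟩
    exact ⟨fun hc => absurd hc (not_mem_HDiffSet hI'),
           fun hc => absurd hc (not_mem_HDiffSet hI)⟩
variable {C : Type}

def cyl (s : List C) : Set (ℕ → C) := {ρ | pref ρ s.length = s}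

@[simp] lemma pref_length (ρ : ℕ → C) (n : ℕ) : (pref ρ n).length = n := by
  simp [pref]

lemma pref_getElem? (ρ : ℕ → C) (n i : ℕ) (h : i < n) : (pref ρ n)[i]? = some (ρ i) := by
  simp [pref, List.getElem?_map, List.getElem?_range, h]

lemma mem_cyl {s : List C} {ρ : ℕ → C} : ρ ∈ cyl s ↔ ∀ i < s.length, s[i]? = some (ρ i) := by
  constructor
  · intro h i hi
    have := congrArg (fun l => l[i]?) h
    rw [← this, pref_getElem? ρ s.length i (by simpa using hi)]
  · intro h
    refine List.ext_getElem? fun i => ?_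
    by_cases hi : i < s.length
    · rw [pref_getElem? ρ s.length i (by simpa using hi), h i hi]
    · rw [List.getElem?_eq_none (by simpa using not_lt.1 hi),
          List.getElem?_eq_none (not_lt.1 hi)]

lemma mem_cyl_pref {ρ' ρ : ℕ → C} {n : ℕ} : ρ' ∈ cyl (pref ρ n) ↔ ∀ i < n, ρ' i = ρ i := by
  rw [mem_cyl]
  simp only [pref_length]
  constructor
  · intro h i hi
    have := h i hi
    rw [pref_getElem? ρ n i hi] at this
    exact (Option.some_injective _ this).symm
  · intro h i hi
    rw [pref_getElem? ρ n i hi, h i hi]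

lemma mem_cyl_self (ρ : ℕ → C) (n : ℕ) : ρ ∈ cyl (pref ρ n) :=
  mem_cyl_pref.2 fun _ _ => rfl

lemma pref_take {ρ : ℕ → C} {m n : ℕ} (h : m ≤ n) : (pref ρ n).take m = pref ρ m := by
  simp [pref, ← List.map_take, List.take_range, h]

lemma cyl_eq_iInter (s : List C) :
    cyl s = ⋂ i : Fin s.length, (fun ρ : ℕ → C => ρ (i : ℕ)) ⁻¹' {c | s[(i : ℕ)]? = some c} := by
  ext ρ
  rw [mem_cyl]
  simp only [mem_iInter, mem_preimage, mem_setOf_eq]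
  exact ⟨fun h i => h i i.2, fun h i hi => h ⟨i, hi⟩⟩

lemma isOpen_cyl (s : List C) : IsOpen[seqTop C] (cyl s) := by
  letI : TopologicalSpace C := ⊥
  haveI : DiscreteTopology C := ⟨rfl⟩
  show IsOpen (cyl s)
  rw [cyl_eq_iInter]
  exact isOpen_iInter_of_finite fun i =>
    (continuous_apply (i : ℕ)).isOpen_preimage _ (isOpen_discrete _)

lemma isClosed_cyl (s : List C) : IsClosed[seqTop C] (cyl s) := by
  letI : TopologicalSpace C := ⊥
  haveI : DiscreteTopology C := ⟨rfl⟩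
  show IsClosed (cyl s)
  rw [cyl_eq_iInter]
  exact isClosed_iInter fun i =>
    (isClosed_discrete _).preimage (continuous_apply (i : ℕ))

lemma exists_cyl_subset {O : Set (ℕ → C)} (hO : IsOpen[seqTop C] O) {ρ : ℕ → C} (hρ : ρ ∈ O) :
    ∃ n, cyl (pref ρ n) ⊆ O := by
  letI : TopologicalSpace C := ⊥
  have hO' : IsOpen O := hO
  obtain ⟨I, u, hu, hsub⟩ := isOpen_pi_iff.1 hO' ρ hρ
  refine ⟨I.sup id + 1, fun ρ' hρ' => hsub ?_⟩
  intro i hi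
  have hlt : i < I.sup id + 1 := Nat.lt_succ_of_le (Finset.le_sup (f := id) hi)
  rw [mem_cyl_pref.1 hρ' i hlt]
  exact (hu i hi).2

lemma dec {A : Type*} (W : A → Set (ℕ → C)) (hW : ∀ a, IsOpen[seqTop C] (W a)) :
    ∃ (J : Type) (V : J → Set (ℕ → C)) (sel : J → A),
      (∀ j, IsOpen[seqTop C] (V j)) ∧ (∀ j, IsClosed[seqTop C] (V j)) ∧
      Pairwise (fun j k : J => Disjoint (V j) (V k)) ∧
      (∀ j, V j ⊆ W (sel j)) ∧ (⋃ j, V j) = ⋃ a, W a := by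
  classical
  set J := {s : List C // (∃ a, cyl s ⊆ W a) ∧ ∀ m < s.length, ¬ ∃ a, cyl (s.take m) ⊆ W a}
    with hJ
  refine ⟨J, fun j => cyl j.1, fun j => j.2.1.choose, fun j => isOpen_cyl _,
    fun j => isClosed_cyl _, ?_, fun j => j.2.1.choose_spec, ?_⟩
  · have key : ∀ (j k : J) (ρ : ℕ → C), ρ ∈ cyl j.1 → ρ ∈ cyl k.1 →
        j.1.length ≤ k.1.length → j.1 = k.1 := by
      rintro ⟨s, hs1, hs2⟩ ⟨t, ht1, ht2⟩ ρ hρs hρt hlen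
      simp only at hρs hρt hlen ⊢
      rcases lt_or_eq_of_le hlen with hlt | heq
      · exfalso
        have h1 : pref ρ s.length = s := hρs
        have h2 : pref ρ t.length = t := hρt
        have hst : s = t.take s.length := by
          rw [← h2, pref_take (le_of_lt hlt)]; exact h1.symm
        exact ht2 s.length hlt (hst ▸ hs1)
      · have h1 : pref ρ s.length = s := hρs
        have h2 : pref ρ t.length = t := hρt
        rw [← h1, ← h2, heq]
    intro j k hne
    rw [disjoint_left]
    intro ρ hρj hρk
    rcases le_total j.1.length k.1.length with h | h
    · exact hne (Subtype.ext (key j k ρ hρj hρk h))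
    · exact hne (Subtype.ext (key k j ρ hρk hρj h).symm)
  · apply Subset.antisymm
    · refine iUnion_subset fun j => (j.2.1.choose_spec).trans (subset_iUnion W _)
    · intro ρ hρ
      rw [mem_iUnion] at hρ
      obtain ⟨a, hρa⟩ := hρ
      have hex : ∃ n, ∃ a, cyl (pref ρ n) ⊆ W a := by
        obtain ⟨n, hn⟩ := exists_cyl_subset (hW a) hρa
        exact ⟨n, a, hn⟩
      set n₀ := Nat.find hex with hn₀
      have hmin : ∀ m < (pref ρ n₀).length, ¬ ∃ a, cyl ((pref ρ n₀).take m) ⊆ W a := by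
        intro m hm
        rw [pref_length] at hm
        rw [pref_take (le_of_lt hm)]
        exact Nat.find_min hex hm
      rw [mem_iUnion]
      exact ⟨⟨pref ρ n₀, Nat.find_spec hex, hmin⟩, mem_cyl_self ρ n₀⟩
lemma FineLambda_one (C : Type) : FineLambda C 1 = {S | IsOpen[seqTop C] S} := by
  rw [FineLambda]; simp

lemma FineLambda_zero (C : Type) : FineLambda C 0 = ∅ := by
  rw [FineLambda]; norm_num

lemma FineLambda_of_one_lt (C : Type) {θ : Ordinal} (h : 1 < θ) :
    FineLambda C θ =
      {S | ∃ (I : Type) (T O : I → Set (ℕ → C)) (η : I → {x : Ordinal // x < θ}),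
        (∀ i, IsOpen[seqTop C] (O i)) ∧ (Pairwise fun i j => Disjoint (O i) (O j)) ∧
        (∀ i, T i ⊆ O i) ∧ S = ⋃ i, T i ∧
        ∀ i, T i ∈ FineLambda C (η i) ∨ (T i)ᶜ ∈ FineLambda C (η i)} := by
  rw [FineLambda]
  rw [if_neg (by exact ne_of_gt h), if_pos h]

section Raise
variable {C : Type}

lemma raise_same {ζ θ : Ordinal} (hle : ζ ≤ θ) (hpar : OrdEven ζ ↔ OrdEven θ)
    (Env : Set (ℕ → C)) (P : Ordinal → Set (ℕ → C))
    (hop : ∀ η < ζ, IsOpen[seqTop C] (P η))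
    (hmono : ∀ η₁ η₂, η₁ ≤ η₂ → η₂ < ζ → P η₁ ⊆ P η₂)
    (hsub : ∀ η < ζ, P η ⊆ Env) :
    ∃ Q : Ordinal → Set (ℕ → C), (∀ η < θ, IsOpen[seqTop C] (Q η)) ∧
      (∀ η₁ η₂, η₁ ≤ η₂ → η₂ < θ → Q η₁ ⊆ Q η₂) ∧ (∀ η < θ, Q η ⊆ Env) ∧
      HDiffSet θ Q = HDiffSet ζ P := by
  letI : TopologicalSpace (ℕ → C) := seqTop C
  classical
  refine ⟨fun η => if η < ζ then P η else ⋃ μ, ⋃ (_ : μ < ζ), P μ, ?_, ?_, ?_,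
    HDiffSet_pad hle hpar P⟩
  · intro η _
    by_cases h : η < ζ
    · simpa [h] using hop η h
    · simp only [h, if_false]
      exact isOpen_iUnion fun μ => isOpen_iUnion fun hμ => hop μ hμ
  · intro η₁ η₂ h12 _
    by_cases h2 : η₂ < ζ
    · have h1 : η₁ < ζ := lt_of_le_of_lt h12 h2
      simpa [h1, h2] using hmono η₁ η₂ h12 h2
    · simp only [h2, if_false]
      by_cases h1 : η₁ < ζ
      · simp only [h1, if_true]
        exact subset_iUnion₂ (s := fun μ _ => P μ) η₁ h1
      · simp only [h1, if_false]
        exact subset_rfl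
  · intro η _
    by_cases h : η < ζ
    · simpa [h] using hsub η h
    · simp only [h, if_false]
      exact iUnion₂_subset hsub

lemma raise {ζ θ : Ordinal} (hle : ζ ≤ θ)
    (Env : Set (ℕ → C)) (P : Ordinal → Set (ℕ → C))
    (hop : ∀ η < ζ, IsOpen[seqTop C] (P η))
    (hmono : ∀ η₁ η₂, η₁ ≤ η₂ → η₂ < ζ → P η₁ ⊆ P η₂)
    (hsub : ∀ η < ζ, P η ⊆ Env) :
    ∃ Q : Ordinal → Set (ℕ → C), (∀ η < θ, IsOpen[seqTop C] (Q η)) ∧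
      (∀ η₁ η₂, η₁ ≤ η₂ → η₂ < θ → Q η₁ ⊆ Q η₂) ∧ (∀ η < θ, Q η ⊆ Env) ∧
      HDiffSet θ Q = HDiffSet ζ P := by
  letI : TopologicalSpace (ℕ → C) := seqTop C
  classical
  by_cases hpar : OrdEven ζ ↔ OrdEven θ
  · exact raise_same hle hpar Env P hop hmono hsub
  · have hζθ : ζ < θ := lt_of_le_of_ne hle (fun h => hpar (by rw [h]))
    have hle' : ζ + 1 ≤ θ := by
      rw [Ordinal.add_one_eq_succ, Order.succ_le_iff]; exact hζθ
    have hpar' : OrdEven (ζ + 1) ↔ OrdEven θ := by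
      have := ordEven_succ ζ
      tauto
    set R : Ordinal → Set (ℕ → C) := fun η => ⋃ μ, ⋃ (_ : μ + 1 ≤ η ∧ μ < ζ), P μ with hR
    have hRop : ∀ η < ζ + 1, IsOpen[seqTop C] (R η) := fun η _ =>
      isOpen_iUnion fun μ => isOpen_iUnion fun hμ => hop μ hμ.2
    have hRmono : ∀ η₁ η₂, η₁ ≤ η₂ → η₂ < ζ + 1 → R η₁ ⊆ R η₂ := by
      intro η₁ η₂ h12 _ ρ hρ
      simp only [hR, mem_iUnion] at hρ ⊢
      obtain ⟨μ, ⟨hμ1, hμ2⟩, hμP⟩ := hρ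
      exact ⟨μ, ⟨le_trans hμ1 h12, hμ2⟩, hμP⟩
    have hRsub : ∀ η < ζ + 1, R η ⊆ Env := by
      intro η _ ρ hρ
      simp only [hR, mem_iUnion] at hρ
      obtain ⟨μ, ⟨_, hμ2⟩, hμP⟩ := hρ
      exact hsub μ hμ2 hμP
    obtain ⟨Q, hQop, hQmono, hQsub, hQeq⟩ := raise_same hle' hpar' Env R hRop hRmono hRsub
    exact ⟨Q, hQop, hQmono, hQsub, hQeq.trans (HDiffSet_flip ζ P)⟩

end Raise

/-- For every nonzero ordinal `θ`, the level `𝒟_θ` of the Hausdorff difference hierarchy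
equals the level `Λ_θ` of the fine Hausdorff hierarchy. -/
theorem statement1 (C : Type) (θ : Ordinal) (hθ : θ ≠ 0) :
    Dclass C θ = FineLambda C θ := by
  letI : TopologicalSpace (ℕ → C) := seqTop C
  classical
  revert hθ
  induction θ using Ordinal.induction with
  | _ θ IH =>
  intro hθ
  rcases eq_or_ne θ 1 with rfl | hθ1
  · -- base case θ = 1
    rw [FineLambda_one]
    apply Subset.antisymm
    · rintro S ⟨O, hop, _, rfl⟩
      rw [HDiffSet_one]
      exact hop 0 zero_lt_one
    · intro S hS
      exact ⟨fun _ => S, fun _ _ => hS, fun _ _ _ _ => subset_rfl, by rw [HDiffSet_one]⟩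
  have hθgt : 1 < θ := lt_of_le_of_ne (Ordinal.one_le_iff_ne_zero.2 hθ) (Ne.symm hθ1)
  apply Subset.antisymm
  · -- Dclass ⊆ FineLambda
    rintro S ⟨O, hop, hmono, rfl⟩
    rcases Ordinal.zero_or_succ_or_isSuccLimit θ with h0 | ⟨ζ, hζ⟩ | hlim
    · exact absurd h0 hθ
    · -- successor case
      rw [← Ordinal.add_one_eq_succ] at hζ
      subst hζ
      have hζθ : ζ < ζ + 1 := by
        rw [Ordinal.add_one_eq_succ]; exact Order.lt_succ ζ
      have hζ0 : ζ ≠ 0 := by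
        rintro rfl
        exact hθ1 (by rw [zero_add])
      obtain ⟨J, V, sel, hVop, hVcl, hVdisj, hVsub, hVun⟩ :=
        dec (fun _ : Unit => O ζ) (fun _ => hop ζ hζθ)
      have hVOζ : ∀ j, V j ⊆ O ζ := fun j => hVsub j
      have hDsub : HDiffSet (ζ + 1) O ⊆ O ζ := by
        rintro ρ ⟨⟨η, hη, hmem⟩, -⟩
        have hηζ : η ≤ ζ := by
          rw [Ordinal.add_one_eq_succ, Order.lt_succ_iff] at hη
          exact hη
        exact hmono η ζ hηζ hζθ hmem
      have hDVj : ∀ j, HDiffSet (ζ + 1) O ∩ V j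
          = V j \ HDiffSet ζ (fun η => O η ∩ V j) := by
        intro j
        rw [← HDiffSet_inter (ζ + 1) O (V j),
            HDiffSet_congr (O' := fun η => if η < ζ then O η ∩ V j else V j)
              (by
                intro η hη
                by_cases h : η < ζ
                · simp [h]
                · have : η = ζ := by
                    rw [Ordinal.add_one_eq_succ, Order.lt_succ_iff] at hη
                    exact le_antisymm hη (not_lt.1 h)
                  subst this
                  simp only [if_neg h]
                  exact inter_eq_right.2 (hVOζ j)),
            HDiffSet_compl (fun η => O η ∩ V j) (V j) (fun η _ => inter_subset_right)]
      rw [FineLambda_of_one_lt C hθgt]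
      refine ⟨J, fun j => HDiffSet (ζ + 1) O ∩ V j, V, fun _ => ⟨ζ, hζθ⟩,
        hVop, hVdisj, fun j => inter_subset_right, ?_, ?_⟩
      · rw [← inter_iUnion, hVun]
        have huc : ⋃ _ : Unit, O ζ = O ζ := iUnion_const _
        rw [huc]
        exact (inter_eq_left.2 hDsub).symm
      · intro j
        right
        rw [← IH ζ hζθ hζ0]
        obtain ⟨i₀, hi₀θ, hi₀⟩ : ∃ i₀, i₀ < ζ ∧ (OrdEven i₀ ↔ ¬ OrdEven ζ) := by
          by_cases h : OrdEven ζ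
          · have h1ζ : 1 < ζ := by
              refine lt_of_le_of_ne (Ordinal.one_le_iff_ne_zero.2 hζ0) ?_
              rintro rfl
              exact not_ordEven_one h
            exact ⟨1, h1ζ, iff_of_false not_ordEven_one (not_not_intro h)⟩
          · exact ⟨0, pos_iff_ne_zero.2 hζ0, iff_of_true ordEven_zero h⟩
        refine ⟨fun η => if i₀ ≤ η then (O η ∩ V j) ∪ (V j)ᶜ else O η ∩ V j, ?_, ?_, ?_⟩
        · intro η hη
          by_cases h : i₀ ≤ η
          · simp only [h, if_true]
            exact ((hop η (hη.trans hζθ)).inter (hVop j)).union (hVcl j).isOpen_compl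
          · simp only [h, if_false]
            exact (hop η (hη.trans hζθ)).inter (hVop j)
        · intro η₁ η₂ h12 h2
          have hm : O η₁ ∩ V j ⊆ O η₂ ∩ V j :=
            inter_subset_inter_left _ (hmono η₁ η₂ h12 (h2.trans hζθ))
          by_cases hb : i₀ ≤ η₂
          · by_cases ha : i₀ ≤ η₁
            · simp only [ha, hb, if_true]
              exact union_subset_union_left _ hm
            · simp only [ha, hb, if_true, if_false]
              exact hm.trans subset_union_left
          · have ha : ¬ i₀ ≤ η₁ := fun hc => hb (hc.trans h12)
            simp only [ha, hb, if_false]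
            exact hm
        · show (HDiffSet (ζ + 1) O ∩ V j)ᶜ = _
          rw [HDiffSet_outside hi₀θ hi₀ (fun η => O η ∩ V j) (V j)
              (fun η _ => inter_subset_right), hDVj j]
          ext ρ
          simp only [mem_compl_iff, mem_diff, mem_union]
          tauto
    · -- limit case
      obtain ⟨J, V, sel, hVop, hVcl, hVdisj, hVsub, hVun⟩ :=
        dec (fun a : {x : Ordinal // x < θ} => O a.1) (fun a => hop a.1 a.2)
      have hDsub : HDiffSet θ O ⊆ ⋃ j, V j := by
        rintro ρ ⟨⟨η, hη, hmem⟩, -⟩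
        rw [hVun, mem_iUnion]
        exact ⟨⟨η, hη⟩, hmem⟩
      have hpick : ∀ j, ∃ ζ', ζ' < θ ∧ ζ' ≠ 0 ∧
          HDiffSet θ O ∩ V j ∈ Dclass C ζ' := by
        intro j
        set ζj := (sel j).1 with hζj
        have hζjθ : ζj < θ := (sel j).2
        have hVsubj : V j ⊆ O ζj := hVsub j
        obtain ⟨ζ', hζζ', hζ'θ, hpar⟩ : ∃ ζ', ζj < ζ' ∧ ζ' < θ ∧
            (OrdEven ζ' ↔ OrdEven θ) := by
          have h1 : ζj + 1 < θ := by
            rw [Ordinal.add_one_eq_succ]; exact hlim.succ_lt hζjθ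
          have h2 : ζj + 1 + 1 < θ := by
            rw [Ordinal.add_one_eq_succ]; exact hlim.succ_lt h1
          by_cases h : OrdEven (ζj + 1) ↔ OrdEven θ
          · exact ⟨ζj + 1, by
              rw [Ordinal.add_one_eq_succ]; exact Order.lt_succ ζj, h1, h⟩
          · refine ⟨ζj + 1 + 1, ?_, h2, ?_⟩
            · calc ζj < ζj + 1 := by
                    rw [Ordinal.add_one_eq_succ]; exact Order.lt_succ ζj
                _ < ζj + 1 + 1 := by
                    rw [Ordinal.add_one_eq_succ (ζj+1)]; exact Order.lt_succ _
            · have := ordEven_succ (ζj + 1)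
              tauto
        refine ⟨ζ', hζ'θ, fun hc => by simp [hc] at hζζ', ?_⟩
        refine ⟨fun η => O η ∩ V j, fun η hη => (hop η (hη.trans hζ'θ)).inter (hVop j),
          fun η₁ η₂ h12 h2 => inter_subset_inter_left _ (hmono η₁ η₂ h12 (h2.trans hζ'θ)), ?_⟩
        show HDiffSet θ O ∩ V j = _
        rw [← HDiffSet_inter θ O (V j)]
        refine (HDiffSet_trunc hζjθ hζζ' (le_of_lt hζ'θ) hpar
          (fun η => O η ∩ V j) ?_).symm
        intro η hη ρ hρ
        exact ⟨hVsubj hρ.2, hρ.2⟩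
      choose f hf1 hf2 hf3 using hpick
      rw [FineLambda_of_one_lt C hθgt]
      refine ⟨J, fun j => HDiffSet θ O ∩ V j, V, fun j => ⟨f j, hf1 j⟩,
        hVop, hVdisj, fun j => inter_subset_right, ?_, ?_⟩
      · rw [← inter_iUnion]
        exact (inter_eq_left.2 hDsub).symm
      · intro j
        left
        rw [← IH (f j) (hf1 j) (hf2 j)]
        exact hf3 j
  · -- FineLambda ⊆ Dclass
    intro S hS
    rw [FineLambda_of_one_lt C hθgt] at hS
    obtain ⟨I, T, Env, ηf, hEop, hEdisj, hTsub, rfl, hmem⟩ := hS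
    have hQ : ∀ i, ∃ Q : Ordinal → Set (ℕ → C), (∀ η < θ, IsOpen[seqTop C] (Q η)) ∧
        (∀ η₁ η₂, η₁ ≤ η₂ → η₂ < θ → Q η₁ ⊆ Q η₂) ∧ (∀ η < θ, Q η ⊆ Env i) ∧
        HDiffSet θ Q = T i := by
      intro i
      set ζ := (ηf i).1 with hζdef
      have hζθ : ζ < θ := (ηf i).2
      rcases hmem i with h | h
      · have hne : ζ ≠ 0 := by
          rintro h0
          rw [hζdef] at h0
          rw [h0, FineLambda_zero] at h
          exact absurd h (notMem_empty _)
        rw [← IH ζ hζθ hne] at h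
        obtain ⟨P, hPop, hPmono, hPeq⟩ := h
        have hloc : HDiffSet ζ (fun η => P η ∩ Env i) = T i := by
          rw [HDiffSet_inter, ← hPeq]
          exact inter_eq_left.2 (hTsub i)
        obtain ⟨Q, hQop, hQmono, hQsub, hQeq⟩ := raise (le_of_lt hζθ) (Env i)
          (fun η => P η ∩ Env i)
          (fun η hη => (hPop η hη).inter (hEop i))
          (fun η₁ η₂ h12 h2 => inter_subset_inter_left _ (hPmono η₁ η₂ h12 h2))
          (fun η _ => inter_subset_right)
        exact ⟨Q, hQop, hQmono, hQsub, hQeq.trans hloc⟩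
      · have hne : ζ ≠ 0 := by
          rintro h0
          rw [hζdef] at h0
          rw [h0, FineLambda_zero] at h
          exact absurd h (notMem_empty _)
        rw [← IH ζ hζθ hne] at h
        obtain ⟨P, hPop, hPmono, hPeq⟩ := h
        have hloc : HDiffSet ζ (fun η => P η ∩ Env i) = (T i)ᶜ ∩ Env i := by
          rw [HDiffSet_inter, ← hPeq]
        have hcompl : HDiffSet (ζ + 1)
            (fun η => if η < ζ then P η ∩ Env i else Env i) = T i := by
          rw [HDiffSet_compl (fun η => P η ∩ Env i) (Env i) (fun η _ => inter_subset_right),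
              hloc]
          ext ρ
          simp only [mem_diff, mem_inter_iff, mem_compl_iff]
          constructor
          · rintro ⟨h1, h2⟩
            by_contra hc
            exact h2 ⟨hc, h1⟩
          · intro hT
            exact ⟨hTsub i hT, fun hc => hc.1 hT⟩
        have hle' : ζ + 1 ≤ θ := by
          rw [Ordinal.add_one_eq_succ, Order.succ_le_iff]; exact hζθ
        obtain ⟨Q, hQop, hQmono, hQsub, hQeq⟩ := raise hle' (Env i)
          (fun η => if η < ζ then P η ∩ Env i else Env i)
          (fun η _ => by
            by_cases h' : η < ζ
            · simpa [h'] using (hPop η h').inter (hEop i)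
            · simpa [h'] using hEop i)
          (fun η₁ η₂ h12 _ => by
            by_cases h2 : η₂ < ζ
            · have h1 : η₁ < ζ := lt_of_le_of_lt h12 h2
              simp only [h1, h2, if_true]
              exact inter_subset_inter_left _ (hPmono η₁ η₂ h12 h2)
            · simp only [h2, if_false]
              by_cases h1 : η₁ < ζ
              · simp only [h1, if_true]
                exact inter_subset_right
              · simp only [h1, if_false]
                exact subset_rfl)
          (fun η _ => by
            by_cases h' : η < ζ
            · simp only [h', if_true]
              exact inter_subset_right
            · simp only [h', if_false]
              exact subset_rfl)
        exact ⟨Q, hQop, hQmono, hQsub, hQeq.trans hcompl⟩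
    choose Q hQop hQmono hQsub hQeq using hQ
    refine ⟨fun η => ⋃ i, Q i η,
      fun η hη => isOpen_iUnion fun i => hQop i η hη,
      fun η₁ η₂ h12 h2 => iUnion_mono fun i => hQmono i η₁ η₂ h12 h2, ?_⟩
    rw [HDiffSet_iUnion Env Q hEdisj (fun i η hη => hQsub i η hη)]
    exact iUnion_congr fun i => (hQeq i).symm
end
end

section
/- For a subset S of C^ω the following are equivalent: (1) S ∈ Δ⁰₂, i.e. S is both a countable union of closed sets and a countable intersection of open sets; (2) S belongs to some level 𝒟_θ of the Hausdorff difference hierarchy; (3) S belongs to some level Λ_θ of the fine Hausdorff hierarchy; (4) there exists an eventually constant labelling function l : C* → {0,1} such that S = 1_l. -/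
open Set Topology

noncomputable section

/-- A labelling function `l : C* → {0,1}` is eventually constant if along every infinite
sequence the labels of the finite prefixes are eventually constant. -/
def EventuallyConstantLabel {C : Type} (l : List C → Bool) : Prop :=
  ∀ ρ : ℕ → C, ∃ N : ℕ, ∀ m : ℕ, N ≤ m → l (pref ρ m) = l (pref ρ N)

/-- `1_l`: the set of infinite sequences infinitely many of whose prefixes are labelled `1`. -/
def OneSet {C : Type} (l : List C → Bool) : Set (ℕ → C) :=
  {ρ | ∀ N : ℕ, ∃ n : ℕ, N ≤ n ∧ l (pref ρ n) = true}

namespace HD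


variable {C : Type}

@[simp] lemma length_pref (ρ : ℕ → C) (n : ℕ) : (pref ρ n).length = n := by
  simp [pref]

@[simp] lemma getElem_pref (ρ : ℕ → C) (n i : ℕ) (h : i < (pref ρ n).length) :
    (pref ρ n)[i] = ρ i := by
  simp [pref] at h ⊢

@[simp] lemma pref_zero (ρ : ℕ → C) : pref ρ 0 = [] := by simp [pref]

lemma take_pref (ρ : ℕ → C) {m n : ℕ} (h : m ≤ n) : (pref ρ n).take m = pref ρ m := by
  apply List.ext_getElem <;> simp [h, Nat.min_eq_left]

lemma pref_prefix (ρ : ℕ → C) {m n : ℕ} (h : m ≤ n) : pref ρ m <+: pref ρ n := by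
  rw [← take_pref ρ h]; exact List.take_prefix _ _

lemma pref_eq_iff {ρ σ : ℕ → C} {n : ℕ} : pref σ n = pref ρ n ↔ ∀ i < n, σ i = ρ i := by
  constructor
  · intro h i hi
    have := List.getElem_of_eq h (i := i) (by simp [hi])
    simpa using this
  · intro h
    apply List.ext_getElem (by simp)
    intro i h1 h2
    simp only [getElem_pref]
    exact h i (by simpa using h1)

lemma pref_eq_of_le {ρ σ : ℕ → C} {m n : ℕ} (h : m ≤ n) (he : pref σ n = pref ρ n) :
    pref σ m = pref ρ m := by
  rw [pref_eq_iff] at he ⊢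
  exact fun i hi => he i (lt_of_lt_of_le hi h)

/-- a set whose membership is determined by length-`n` prefixes is open -/
lemma isOpen_prefDet (A : Set (ℕ → C)) (n : ℕ)
    (h : ∀ ρ ∈ A, ∀ σ, pref σ n = pref ρ n → σ ∈ A) : IsOpen[seqTop C] A := by
  letI : TopologicalSpace C := ⊥
  letI := seqTop C
  have : A = ⋃ ρ ∈ A, ⋂ i ∈ Finset.range n, (fun σ : ℕ → C => σ i) ⁻¹' {ρ i} := by
    ext σ
    simp only [Set.mem_iUnion, Set.mem_iInter, Set.mem_preimage, Set.mem_singleton_iff,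
      Finset.mem_range]
    constructor
    · intro hσ; exact ⟨σ, hσ, fun i _ => rfl⟩
    · rintro ⟨ρ, hρ, hagree⟩
      exact h ρ hρ σ (pref_eq_iff.2 hagree)
  rw [this]
  refine isOpen_biUnion fun ρ _ => isOpen_biInter_finset fun i _ => ?_
  exact (continuous_apply i).isOpen_preimage _ trivial

/-- openness criterion, sufficiency -/
lemma isOpen_of_pref (A : Set (ℕ → C))
    (h : ∀ ρ ∈ A, ∃ n, ∀ σ, pref σ n = pref ρ n → σ ∈ A) : IsOpen[seqTop C] A := by
  letI : TopologicalSpace C := ⊥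
  letI := seqTop C
  rw [isOpen_iff_forall_mem_open]
  intro ρ hρ
  obtain ⟨n, hn⟩ := h ρ hρ
  refine ⟨{σ | pref σ n = pref ρ n}, fun σ hσ => hn σ hσ, ?_, rfl⟩
  exact isOpen_prefDet _ n fun τ hτ σ hστ => by rw [Set.mem_setOf_eq, hστ]; exact hτ

/-- openness criterion, necessity -/
lemma pref_of_isOpen {A : Set (ℕ → C)} (hA : IsOpen[seqTop C] A) :
    ∀ ρ ∈ A, ∃ n, ∀ σ, pref σ n = pref ρ n → σ ∈ A := by
  letI : TopologicalSpace C := ⊥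
  letI := seqTop C
  intro ρ hρ
  obtain ⟨I, u, hu, hsub⟩ := isOpen_pi_iff.1 hA ρ hρ
  rcases I.eq_empty_or_nonempty with h | h
  · exact ⟨0, fun σ _ => hsub (by simp [h])⟩
  refine ⟨I.max' h + 1, fun σ hσ => hsub ?_⟩
  intro i hi
  have : σ i = ρ i := pref_eq_iff.1 hσ i (Nat.lt_succ_of_le (I.le_max' i hi))
  rw [this]; exact (hu i hi).2


open Ordinal

lemma two_mul_decomp (a : Ordinal) :
    ∃ (lam : Ordinal) (k : ℕ), (lam = 0 ∨ Order.IsSuccLimit lam) ∧ 2 * a = lam + 2 * (k : Ordinal) := by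
  obtain ⟨n, hn⟩ := Ordinal.lt_omega0.1 (Ordinal.mod_lt a Ordinal.omega0_ne_zero)
  refine ⟨ω * (a / ω), n, ?_, ?_⟩
  · rcases eq_or_ne (a / ω) 0 with h | h
    · left; simp [h]
    · right
      rw [Ordinal.isSuccLimit_iff_omega0_dvd]
      exact ⟨_root_.mul_ne_zero Ordinal.omega0_ne_zero h, ⟨_, rfl⟩⟩
  · have h2ω : (2 : Ordinal) * ω = ω :=
      Ordinal.mul_omega0 (by norm_num) (Ordinal.nat_lt_omega0 2)
    calc 2 * a = 2 * (ω * (a / ω) + a % ω) := by rw [Ordinal.div_add_mod]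
    _ = 2 * (ω * (a / ω)) + 2 * (a % ω) := by rw [mul_add]
    _ = ω * (a / ω) + 2 * (n : Ordinal) := by rw [← mul_assoc, h2ω, hn]

lemma mod_omega_of_limit_add {lam : Ordinal} (h : lam = 0 ∨ Order.IsSuccLimit lam) (b : Ordinal)
    (hb : b < Ordinal.omega0) : (lam + b) % Ordinal.omega0 = b := by
  rcases h with h | h
  · rw [h, zero_add, Ordinal.mod_eq_of_lt hb]
  · obtain ⟨q, rfl⟩ := (Ordinal.isSuccLimit_iff_omega0_dvd.1 h).2
    rw [Ordinal.mul_add_mod_self, Ordinal.mod_eq_of_lt hb]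

lemma ordEven_two_mul (a : Ordinal) : OrdEven (2 * a) := two_mul_decomp a

lemma nat_cast_two_mul (k : ℕ) : (2 : Ordinal) * (k : Ordinal) = ((2 * k : ℕ) : Ordinal) := by
  push_cast; ring

lemma not_ordEven_two_mul_add_one (a : Ordinal) : ¬ OrdEven (2 * a + 1) := by
  rintro ⟨lam, k, hl, he⟩
  obtain ⟨lam', n, hl', he'⟩ := two_mul_decomp a
  have hL : (2 * a + 1) % ω = ((2 * n + 1 : ℕ) : Ordinal) := by
    rw [he', add_assoc]
    have : (2 : Ordinal) * (n : Ordinal) + 1 = ((2 * n + 1 : ℕ) : Ordinal) := by push_cast; ring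
    rw [this]
    exact mod_omega_of_limit_add hl' _ (Ordinal.nat_lt_omega0 _)
  have hR : (2 * a + 1) % ω = ((2 * k : ℕ) : Ordinal) := by
    rw [he, nat_cast_two_mul]
    exact mod_omega_of_limit_add hl _ (Ordinal.nat_lt_omega0 _)
  rw [hL] at hR
  have : 2 * n + 1 = 2 * k := Nat.cast_injective hR
  omega

lemma not_ordEven_two_mul_add_three (a : Ordinal) : ¬ OrdEven (2 * a + 3) := by
  have : 2 * a + 3 = 2 * (a + 1) + 1 := by
    rw [mul_add_one, add_assoc]
    norm_num
  rw [this]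
  exact not_ordEven_two_mul_add_one _

/-- `FlipRel l t s` : `t` properly extends `s` and has a different label. -/
def FlipRel (l : List C → Bool) (t s : List C) : Prop :=
  s <+: t ∧ l t ≠ l s

lemma FlipRel.length_lt {l : List C → Bool} {t s : List C} (h : FlipRel l t s) :
    s.length < t.length := by
  rcases h with ⟨hp, hne⟩
  rcases hp.length_le.lt_or_eq with h | h
  · exact h
  · exact absurd (List.IsPrefix.eq_of_length hp h).symm (by rintro rfl; exact hne rfl)

lemma flipRel_wf {l : List C → Bool} (hl : EventuallyConstantLabel l) :
    WellFounded (FlipRel l) := by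
  classical
  by_contra hwf
  -- extract an infinite descending chain
  obtain ⟨a, ha⟩ : ∃ a : ℕ → List C, ∀ n, FlipRel l (a (n + 1)) (a n) := by
    have : ∃ x, ¬ Acc (FlipRel l) x := by
      by_contra h
      push_neg at h
      exact hwf ⟨h⟩
    obtain ⟨x, hx⟩ := this
    have key : ∀ y, ¬ Acc (FlipRel l) y → ∃ z, FlipRel l z y ∧ ¬ Acc (FlipRel l) z := by
      intro y hy
      by_contra h
      push_neg at h
      exact hy (Acc.intro y fun z hz => h z hz)
    choose f hf1 hf2 using key
    set g : {y : List C // ¬ Acc (FlipRel l) y} → {y : List C // ¬ Acc (FlipRel l) y} :=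
      fun p => ⟨f p.1 p.2, hf2 p.1 p.2⟩ with hg
    refine ⟨fun n => (g^[n] ⟨x, hx⟩).1, fun n => ?_⟩
    show FlipRel l (g^[n+1] ⟨x, hx⟩).1 (g^[n] ⟨x, hx⟩).1
    rw [Function.iterate_succ_apply']
    exact hf1 _ _
  -- the chain has strictly increasing lengths; prefixes cohere
  have hpre : ∀ m n, m ≤ n → a m <+: a n := by
    intro m n h
    induction n with
    | zero => simp_all
    | succ n ih =>
      rcases Nat.lt_or_ge m (n+1) with h' | h'
      · exact (ih (by omega)).trans (ha n).1
      · have : m = n + 1 := by omega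
        subst this; rfl
  have hlen : ∀ n, n ≤ (a n).length := by
    intro n
    induction n with
    | zero => omega
    | succ n ih => have := (ha n).length_lt; omega
  -- build the limit sequence
  set ρ : ℕ → C := fun k => (a (k + 1)).get ⟨k, lt_of_lt_of_le (Nat.lt_succ_self k) (hlen (k+1))⟩ with hρ
  have hagree : ∀ n, pref ρ (a n).length = a n := by
    intro n
    apply List.ext_getElem (by simp)
    intro i h1 h2
    simp only [getElem_pref]
    -- ρ i = (a (i+1)).get i ; both a (i+1), a n prefixes of a (max)
    have hi : i < (a n).length := by simpa using h1
    rcases Nat.le_total (i+1) n with h | h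
    · have hp := hpre (i+1) n h
      have := List.IsPrefix.getElem hp (i := i) (by simpa using hlen (i+1))
      simpa [hρ] using this
    · have hp := hpre n (i+1) h
      have := List.IsPrefix.getElem hp (i := i) hi
      simpa [hρ] using this.symm
  obtain ⟨N, hN⟩ := hl ρ
  have key : ∀ n, N ≤ n → l (a n) = l (pref ρ N) := by
    intro n hn
    have h1 : N ≤ (a n).length := le_trans hn (hlen n)
    rw [← hagree n]
    exact hN _ h1
  have h1 := key N le_rfl
  have h2 := key (N+1) (by omega)
  exact (ha N).2 (by rw [h1, h2])

lemma isPrefix_getElem {s t : List C} (h : s <+: t) {i : ℕ} (hi : i < s.length) :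
    s[i] = t[i]'(lt_of_lt_of_le hi h.length_le) := List.IsPrefix.getElem h hi

variable {l : List C → Bool}

universe u

def frank0 (hl : EventuallyConstantLabel l) (s : List C) : Ordinal.{0} :=
  ((flipRel_wf hl).apply s).rank

lemma frank0_lt (hl : EventuallyConstantLabel l) {t s : List C} (h : FlipRel l t s) :
    frank0 hl t < frank0 hl s :=
  Acc.rank_lt_of_rel _ h

lemma frank0_le (hl : EventuallyConstantLabel l) {s t : List C} (hp : s <+: t)
    (he : l t = l s) : frank0 hl t ≤ frank0 hl s := by
  rw [frank0, Acc.rank_eq]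
  refine ciSup_le' fun b => ?_
  rw [Order.succ_le_iff]
  refine frank0_lt hl ⟨hp.trans b.2.1, ?_⟩
  exact fun hc => b.2.2 (hc.trans he.symm)

def frank (hl : EventuallyConstantLabel l) (s : List C) : Ordinal.{u} :=
  Ordinal.lift.{u, 0} (frank0 hl s)

lemma frank_lt (hl : EventuallyConstantLabel l) {t s : List C} (h : FlipRel l t s) :
    frank.{u} hl t < frank.{u} hl s :=
  Ordinal.lift_lt.2 (frank0_lt hl h)

lemma frank_le (hl : EventuallyConstantLabel l) {s t : List C} (hp : s <+: t)
    (he : l t = l s) : frank.{u} hl t ≤ frank.{u} hl s :=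
  Ordinal.lift_le.2 (frank0_le hl hp he)

def phiO (hl : EventuallyConstantLabel l) (s : List C) : Ordinal.{u} :=
  2 * frank.{u} hl s + (if l s then 0 else 1)

lemma phiO_le (hl : EventuallyConstantLabel l) {s t : List C} (hp : s <+: t) :
    phiO.{u} hl t ≤ phiO.{u} hl s := by
  rcases eq_or_ne (l t) (l s) with he | he
  · unfold phiO
    rw [he]
    exact add_le_add_left (mul_le_mul_right (frank_le hl hp he) 2) _
  · have h1 : frank.{u} hl t < frank.{u} hl s := frank_lt hl ⟨hp, he⟩
    have h2 : 2 * frank.{u} hl t + 2 ≤ 2 * frank.{u} hl s := by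
      have : 2 * (frank.{u} hl t + 1) ≤ 2 * frank.{u} hl s :=
        mul_le_mul_right (Order.succ_le_iff.2 h1) 2
      rwa [mul_add_one] at this
    calc phiO.{u} hl t ≤ 2 * frank.{u} hl t + 1 := by
          unfold phiO
          refine add_le_add_right ?_ _
          split <;> norm_num
    _ ≤ 2 * frank.{u} hl t + 2 := le_of_lt (add_lt_add_right one_lt_two _)
    _ ≤ 2 * frank.{u} hl s := h2
    _ ≤ phiO.{u} hl s := by unfold phiO; exact le_self_add

lemma ordEven_phiO_iff (hl : EventuallyConstantLabel l) (s : List C) :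
    OrdEven (phiO.{u} hl s) ↔ l s = true := by
  unfold phiO
  cases hls : l s
  · rw [if_neg (by simp)]
    exact iff_of_false (not_ordEven_two_mul_add_one _) (by simp)
  · rw [if_pos rfl, add_zero]
    exact iff_of_true (ordEven_two_mul _) rfl

lemma phiO_le_root (hl : EventuallyConstantLabel l) (s : List C) :
    phiO.{u} hl s ≤ 2 * frank.{u} hl [] + 1 := by
  calc phiO.{u} hl s ≤ phiO.{u} hl [] := phiO_le hl (List.nil_prefix)
  _ ≤ 2 * frank.{u} hl [] + 1 := by
      unfold phiO
      refine add_le_add_right ?_ _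
      split <;> norm_num

lemma oneSet_iff_eventually {l : List C → Bool} {ρ : ℕ → C} {N : ℕ}
    (h : ∀ m, N ≤ m → l (pref ρ m) = l (pref ρ N)) :
    ρ ∈ OneSet l ↔ l (pref ρ N) = true := by
  constructor
  · rintro hρ
    obtain ⟨n, hn, ht⟩ := hρ N
    rw [← h n hn]; exact ht
  · intro ht M
    exact ⟨max M N, le_max_left _ _, by rw [h _ (le_max_right M N)]; exact ht⟩

lemma imp_4_2 {S : Set (ℕ → C)}
    (h : ∃ l : List C → Bool, EventuallyConstantLabel l ∧ S = OneSet l) :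
    ∃ θ : Ordinal.{u}, S ∈ Dclass C θ := by
  obtain ⟨l, hl, rfl⟩ := h
  have hθ : ¬ OrdEven (2 * frank.{u} hl [] + 3) := not_ordEven_two_mul_add_three _
  refine ⟨2 * frank.{u} hl [] + 3,
    fun η => {ρ | ∃ n, phiO.{u} hl (pref ρ n) ≤ η}, ?_, ?_, ?_⟩
  · intro η _
    refine isOpen_of_pref _ fun ρ hρ => ?_
    obtain ⟨n, hn⟩ := hρ
    exact ⟨n, fun σ hσ => ⟨n, by rw [hσ]; exact hn⟩⟩
  · rintro η₁ η₂ h12 _ ρ ⟨n, hn⟩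
    exact ⟨n, hn.trans h12⟩
  · ext ρ
    obtain ⟨n₀, hn₀⟩ : ∃ n₀, ∀ n, phiO.{u} hl (pref ρ n₀) ≤ phiO.{u} hl (pref ρ n) := by
      obtain ⟨m, hm⟩ := csInf_mem (Set.range_nonempty (fun n => phiO.{u} hl (pref ρ n)))
      refine ⟨m, fun n => ?_⟩
      have h1 : phiO.{u} hl (pref ρ m) = _ := hm
      rw [h1]
      exact csInf_le' ⟨n, rfl⟩
    have hmemO : ∀ η, (∃ n, phiO.{u} hl (pref ρ n) ≤ η) ↔ phiO.{u} hl (pref ρ n₀) ≤ η := by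
      intro η
      exact ⟨fun ⟨n, hn⟩ => (hn₀ n).trans hn, fun h => ⟨n₀, h⟩⟩
    have hμθ : phiO.{u} hl (pref ρ n₀) < 2 * frank.{u} hl [] + 3 := by
      have h1 : phiO.{u} hl (pref ρ n₀) ≤ 2 * frank.{u} hl [] + 1 := phiO_le_root hl _
      exact lt_of_le_of_lt h1 (add_lt_add_right (by norm_num) _)
    have hsInf : sInf {η : Ordinal.{u} | η < 2 * frank.{u} hl [] + 3 ∧
        ∃ n, phiO.{u} hl (pref ρ n) ≤ η} = phiO.{u} hl (pref ρ n₀) := by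
      apply le_antisymm
      · exact csInf_le' ⟨hμθ, ⟨n₀, le_rfl⟩⟩
      · refine le_csInf ⟨_, hμθ, ⟨n₀, le_rfl⟩⟩ fun η hη => ?_
        exact (hmemO η).1 hη.2
    obtain ⟨N, hN⟩ := hl ρ
    have hval : phiO.{u} hl (pref ρ (max n₀ N)) = phiO.{u} hl (pref ρ n₀) :=
      le_antisymm (phiO_le hl (pref_prefix ρ (le_max_left _ _))) (hn₀ _)
    have heven : OrdEven (phiO.{u} hl (pref ρ n₀)) ↔ l (pref ρ N) = true := by
      rw [← hval, ordEven_phiO_iff, hN _ (le_max_right _ _)]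
    have hone : ρ ∈ OneSet l ↔ l (pref ρ N) = true := oneSet_iff_eventually hN
    simp only [HDiffSet, Set.mem_setOf_eq, hsInf]
    constructor
    · intro hρ
      refine ⟨⟨_, hμθ, ⟨n₀, le_rfl⟩⟩, ?_⟩
      rw [heven, ← hone]
      exact iff_of_true hρ hθ
    · intro hρ
      rw [hone, ← heven]
      rcases hρ with ⟨-, h2⟩
      rw [h2]
      exact hθ

lemma imp_2_4 {S : Set (ℕ → C)} (h : ∃ θ : Ordinal.{u}, S ∈ Dclass C θ) :
    ∃ l : List C → Bool, EventuallyConstantLabel l ∧ S = OneSet l := by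
  classical
  obtain ⟨θ, O, hopen, hmono, rfl⟩ := h
  set P : List C → Set Ordinal.{u} :=
    fun s => {η | η < θ ∧ ∀ σ : ℕ → C, pref σ s.length = s → σ ∈ O η} with hP
  set l : List C → Bool := fun s =>
    decide ((P s).Nonempty ∧ (OrdEven (sInf (P s)) ↔ ¬ OrdEven θ)) with hldef
  have hPsub : ∀ (ρ : ℕ → C) (n : ℕ), P (pref ρ n) ⊆ {η | η < θ ∧ ρ ∈ O η} := by
    intro ρ n η hη
    exact ⟨hη.1, hη.2 ρ (by rw [length_pref])⟩
  have key : ∀ ρ : ℕ → C, ∃ N, (∀ m, N ≤ m → l (pref ρ m) = l (pref ρ N)) ∧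
      (ρ ∈ HDiffSet θ O ↔ l (pref ρ N) = true) := by
    intro ρ
    by_cases hU : ∃ η < θ, ρ ∈ O η
    · have hQne : {η | η < θ ∧ ρ ∈ O η}.Nonempty := by
        obtain ⟨η, h1, h2⟩ := hU
        exact ⟨η, h1, h2⟩
      have hη₀ := csInf_mem hQne
      obtain ⟨n₀, hn₀⟩ :=
        pref_of_isOpen (hopen (sInf {η | η < θ ∧ ρ ∈ O η}) hη₀.1) ρ hη₀.2
      have hkey : ∀ m, n₀ ≤ m →
          sInf (P (pref ρ m)) = sInf {η | η < θ ∧ ρ ∈ O η} ∧ (P (pref ρ m)).Nonempty := by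
        intro m hm
        have hmem : sInf {η | η < θ ∧ ρ ∈ O η} ∈ P (pref ρ m) := by
          refine ⟨hη₀.1, fun σ hσ => ?_⟩
          rw [length_pref] at hσ
          exact hn₀ σ (pref_eq_of_le hm hσ)
        refine ⟨le_antisymm (csInf_le' hmem) ?_, ⟨_, hmem⟩⟩
        refine le_csInf ⟨_, hmem⟩ fun η hη => ?_
        exact csInf_le' (hPsub ρ m hη)
      refine ⟨n₀, fun m hm => ?_, ?_⟩
      · have h1 := hkey m hm
        have h2 := hkey n₀ le_rfl
        rw [hldef]
        simp only [decide_eq_decide]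
        rw [h1.1, h2.1]
        exact and_congr_left fun _ => iff_of_true h1.2 h2.2
      · have h2 := hkey n₀ le_rfl
        rw [hldef]
        simp only [decide_eq_true_eq]
        constructor
        · rintro ⟨-, hpar⟩
          exact ⟨h2.2, by rw [h2.1]; exact hpar⟩
        · rintro ⟨-, hpar⟩
          rw [h2.1] at hpar
          exact ⟨hU, hpar⟩
    · refine ⟨0, fun m _ => ?_, ?_⟩
      · rw [hldef]
        simp only [decide_eq_decide]
        constructor
        · rintro ⟨⟨η, hη⟩, -⟩
          exact absurd ⟨η, (hPsub ρ m hη).1, (hPsub ρ m hη).2⟩ hU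
        · rintro ⟨⟨η, hη⟩, -⟩
          exact absurd ⟨η, (hPsub ρ 0 hη).1, (hPsub ρ 0 hη).2⟩ hU
      · rw [hldef]
        simp only [decide_eq_true_eq]
        constructor
        · rintro ⟨h1, -⟩
          exact absurd h1 hU
        · rintro ⟨⟨η, hη⟩, -⟩
          exact absurd ⟨η, (hPsub ρ 0 hη).1, (hPsub ρ 0 hη).2⟩ hU
  refine ⟨l, fun ρ => ⟨(key ρ).choose, (key ρ).choose_spec.1⟩, ?_⟩
  ext ρ
  obtain ⟨N, hN, hiff⟩ := key ρ
  rw [show (ρ ∈ HDiffSet θ O) ↔ l (pref ρ N) = true from hiff]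
  exact (oneSet_iff_eventually hN).symm

/-! ### cylinders -/

def cylSet (s : List C) : Set (ℕ → C) := {ρ | pref ρ s.length = s}

lemma mem_cylSet_iff {s : List C} {ρ : ℕ → C} : ρ ∈ cylSet s ↔ pref ρ s.length = s :=
  Iff.rfl

lemma isOpen_cylSet (s : List C) : IsOpen[seqTop C] (cylSet s) :=
  isOpen_prefDet _ s.length fun ρ hρ σ hσ => by
    rw [mem_cylSet_iff] at hρ ⊢
    rw [hσ, hρ]

lemma isOpen_compl_cylSet (s : List C) : IsOpen[seqTop C] (cylSet s)ᶜ :=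
  isOpen_prefDet _ s.length fun ρ hρ σ hσ h => hρ (show pref ρ s.length = s by rw [← hσ]; exact h)

lemma cylSet_nil : cylSet ([] : List C) = Set.univ := by
  ext ρ
  simp [cylSet]

lemma pref_mem_cylSet (ρ : ℕ → C) (n : ℕ) : ρ ∈ cylSet (pref ρ n) := by
  rw [mem_cylSet_iff, length_pref]

lemma cylSet_mono {s t : List C} (h : s <+: t) : cylSet t ⊆ cylSet s := by
  intro ρ hρ
  rw [mem_cylSet_iff] at hρ ⊢
  rw [← take_pref ρ h.length_le, hρ]
  exact (List.prefix_iff_eq_take.1 h).symm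

lemma eq_pref_of_mem_cylSet {s : List C} {ρ : ℕ → C} (h : ρ ∈ cylSet s) :
    s = pref ρ s.length := h.symm

/-! ### the sets A_s and minimal flips -/

/-- points of the cylinder `[s]` whose eventual label differs from `l s` -/
def Aset (l : List C → Bool) (s : List C) : Set (ℕ → C) :=
  {ρ | ρ ∈ cylSet s ∧ ∃ N, ∀ m, N ≤ m → l (pref ρ m) ≠ l s}

/-- minimal flip extensions of `s` -/
def MinFlip (l : List C → Bool) (s : List C) : Set (List C) :=
  {t | s <+: t ∧ l t ≠ l s ∧ ∀ u, s <+: u → u <+: t → u ≠ t → l u = l s}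

lemma minFlip_flipRel {l : List C → Bool} {s t : List C} (h : t ∈ MinFlip l s) :
    FlipRel l t s := ⟨h.1, h.2.1⟩

lemma minFlip_disjoint {l : List C → Bool} {s : List C} {t t' : List C}
    (ht : t ∈ MinFlip l s) (ht' : t' ∈ MinFlip l s) (hne : t ≠ t') :
    Disjoint (cylSet t) (cylSet t') := by
  rw [Set.disjoint_left]
  intro ρ h1 h2
  rw [mem_cylSet_iff] at h1 h2
  -- t and t' are comparable prefixes of ρ
  have hcomp : t <+: t' ∨ t' <+: t := by
    rcases Nat.le_total t.length t'.length with h | h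
    · left; rw [← h1, ← h2]; exact pref_prefix ρ h
    · right; rw [← h1, ← h2]; exact pref_prefix ρ h
  rcases hcomp with h | h
  · exact ht.2.1 (ht'.2.2 t ht.1 h hne)
  · exact ht'.2.1 (ht.2.2 t' ht'.1 h (Ne.symm hne))

lemma aset_eq {l : List C → Bool} (hl : EventuallyConstantLabel l) (s : List C) :
    Aset l s = ⋃ t : MinFlip l s, (cylSet (t : List C) \ Aset l t) := by
  ext ρ
  simp only [Set.mem_iUnion, Set.mem_diff]
  constructor
  · rintro ⟨hcyl, N, hN⟩
    have hex : ∃ m, s.length ≤ m ∧ l (pref ρ m) ≠ l s :=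
      ⟨max N s.length, le_max_right _ _, hN _ (le_max_left _ _)⟩
    classical
    obtain ⟨hm₀le, hm₀ne⟩ := Nat.find_spec hex
    have hst : s <+: pref ρ (Nat.find hex) := by
      rw [mem_cylSet_iff] at hcyl
      conv_lhs => rw [← hcyl]
      exact pref_prefix ρ hm₀le
    have htM : pref ρ (Nat.find hex) ∈ MinFlip l s := by
      refine ⟨hst, hm₀ne, fun u hsu hut hune => ?_⟩
      have hlenle : u.length ≤ Nat.find hex := by simpa using hut.length_le
      have hulen : u = pref ρ u.length := by
        have h1 := List.prefix_iff_eq_take.1 hut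
        conv_lhs => rw [h1]
        rw [take_pref ρ hlenle]
      have hlt : u.length < Nat.find hex := by
        rcases lt_or_ge u.length (Nat.find hex) with h | h
        · exact h
        · have h2 : pref ρ u.length = pref ρ (Nat.find hex) := by
            rw [le_antisymm hlenle h]
          exact absurd (hulen.trans h2) hune
      have hmin := Nat.find_min hex hlt
      push_neg at hmin
      rw [hulen]
      exact hmin (by simpa [← hulen] using hsu.length_le)
    refine ⟨⟨_, htM⟩, pref_mem_cylSet ρ _, ?_⟩
    rintro ⟨-, N', hN'⟩
    have hs := hN (max N N') (le_max_left _ _)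
    have ht'' : l (pref ρ (N ⊔ N')) ≠ l (pref ρ (Nat.find hex)) :=
      hN' (max N N') (le_max_right _ _)
    clear hN'
    revert hs ht'' hm₀ne
    generalize pref ρ (Nat.find hex) = q
    cases (l s) <;> cases (l q) <;> cases (l (pref ρ (max N N'))) <;> simp
  · rintro ⟨⟨t, htM⟩, hcyl, hnA⟩
    have hst : s <+: t := htM.1
    have hρs : ρ ∈ cylSet s := cylSet_mono hst hcyl
    obtain ⟨N, hN⟩ := hl ρ
    have hb : l (pref ρ N) = l t := by
      by_contra hb
      exact hnA ⟨hcyl, N, fun m hm => by rw [hN m hm]; exact hb⟩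
    refine ⟨hρs, N, fun m hm => ?_⟩
    rw [hN m hm, hb]
    exact htM.2.1

lemma ord_add_two_lt {a b : Ordinal.{u}} (h : a < b) : a + 2 < b + 2 := by
  have h12 : (1 : Ordinal.{u}) + 2 = 3 := by
    rw [show (2 : Ordinal.{u}) = 1 + 1 from one_add_one_eq_two.symm, ← add_assoc,
      one_add_one_eq_two, two_add_one_eq_three]
  have h23 : (2 : Ordinal.{u}) < 3 := by
    rw [← two_add_one_eq_three]
    exact lt_add_one 2
  have h1 : a + 2 < a + 1 + 2 := by
    rw [add_assoc, h12]
    exact add_lt_add_right h23 a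
  exact lt_of_lt_of_le h1 (add_le_add_left (Order.add_one_le_iff.2 h) 2)

lemma one_lt_add_two (a : Ordinal.{u}) : 1 < a + 2 :=
  lt_of_lt_of_le one_lt_two (le_add_self)

lemma aset_mem_fineLambda {l : List C → Bool} (hl : EventuallyConstantLabel l) (s : List C) :
    Aset l s ∪ (cylSet s)ᶜ ∈ FineLambda C (frank.{u} hl s + 2) := by
  induction s using (flipRel_wf hl).induction with
  | _ s IH =>
  have hθ1 : 1 < frank.{u} hl s + 2 := one_lt_add_two _
  rw [FineLambda, if_neg hθ1.ne', if_pos hθ1]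
  refine ⟨Option {t // t ∈ MinFlip l s},
    (fun i => Option.elim i (cylSet s)ᶜ (fun t => cylSet (t : List C) \ Aset l t)),
    (fun i => Option.elim i (cylSet s)ᶜ (fun t => cylSet (t : List C))),
    (fun i => Option.elim i ⟨1, hθ1⟩
      (fun t => ⟨frank.{u} hl t + 2, ord_add_two_lt (frank_lt hl (minFlip_flipRel t.2))⟩)),
    ?_, ?_, ?_, ?_, ?_⟩
  · rintro (_ | t)
    · exact isOpen_compl_cylSet s
    · exact isOpen_cylSet _
  · rintro (_ | t) (_ | t') hne
    · exact absurd rfl hne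
    · exact Disjoint.mono_right (cylSet_mono t'.2.1) disjoint_compl_left
    · exact Disjoint.mono_left (cylSet_mono t.2.1) disjoint_compl_right
    · refine minFlip_disjoint t.2 t'.2 fun h => hne ?_
      exact congrArg some (Subtype.ext h)
  · rintro (_ | t)
    · exact le_rfl
    · exact Set.diff_subset
  · rw [Set.iUnion_option]
    simp only [Option.elim]
    rw [Set.union_comm, aset_eq hl s]
  · rintro (_ | t)
    · left
      simp only [Option.elim]
      rw [FineLambda, if_pos rfl]
      exact isOpen_compl_cylSet s
    · right
      simp only [Option.elim]
      have hc : (cylSet (t : List C) \ Aset l t)ᶜ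
          = Aset l (t : List C) ∪ (cylSet (t : List C))ᶜ := by
        ext ρ
        simp only [Set.mem_compl_iff, Set.mem_diff, Set.mem_union]
        have : ρ ∈ Aset l (t : List C) → ρ ∈ cylSet (t : List C) := fun h => h.1
        tauto
      rw [hc]
      exact IH _ (minFlip_flipRel t.2)

lemma imp_4_3 {S : Set (ℕ → C)}
    (h : ∃ l : List C → Bool, EventuallyConstantLabel l ∧ S = OneSet l) :
    ∃ θ : Ordinal.{u}, S ∈ FineLambda C θ := by
  obtain ⟨l, hl, rfl⟩ := h
  have hnil := aset_mem_fineLambda.{u} hl []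
  rw [cylSet_nil, Set.compl_univ, Set.union_empty] at hnil
  cases hnil0 : l [] with
  | false =>
    refine ⟨frank.{u} hl [] + 2, ?_⟩
    have : OneSet l = Aset l [] := by
      ext ρ
      obtain ⟨N, hN⟩ := hl ρ
      rw [oneSet_iff_eventually hN]
      constructor
      · intro ht
        refine ⟨by simp [cylSet_nil], N, fun m hm => ?_⟩
        rw [hN m hm, ht, hnil0]
        simp
      · rintro ⟨-, N', hN'⟩
        have h1 := hN' (max N N') (le_max_right _ _)
        have h2 := hN (max N N') (le_max_left _ _)
        rw [h2, hnil0] at h1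
        simpa using h1
    rw [this]
    exact hnil
  | true =>
    have hcompl : (OneSet l)ᶜ = Aset l [] := by
      ext ρ
      obtain ⟨N, hN⟩ := hl ρ
      rw [Set.mem_compl_iff, oneSet_iff_eventually hN]
      constructor
      · intro ht
        refine ⟨by simp [cylSet_nil], N, fun m hm => ?_⟩
        rw [hN m hm, hnil0]
        simpa using ht
      · rintro ⟨-, N', hN'⟩
        have h1 := hN' (max N N') (le_max_right _ _)
        have h2 := hN (max N N') (le_max_left _ _)
        rw [h2, hnil0] at h1
        simpa using h1
    refine ⟨frank.{u} hl [] + 2 + 1, ?_⟩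
    have hθ1 : 1 < frank.{u} hl [] + 2 + 1 :=
      lt_of_lt_of_le (one_lt_add_two _) (le_of_lt (lt_add_one _))
    rw [FineLambda, if_neg hθ1.ne', if_pos hθ1]
    refine ⟨PUnit, (fun _ => OneSet l), (fun _ => Set.univ),
      (fun _ => ⟨frank.{u} hl [] + 2, lt_add_one _⟩), ?_, ?_, ?_, ?_, ?_⟩
    · intro _; exact @isOpen_univ _ (seqTop C)
    · intro i j hne; exact absurd (Subsingleton.elim i j) hne
    · intro _; exact Set.subset_univ _
    · rw [Set.iUnion_const]
    · intro _
      right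
      rw [show ((⟨frank.{u} hl [] + 2, lt_add_one _⟩ :
        {x : Ordinal.{u} // x < frank.{u} hl [] + 2 + 1}) : Ordinal.{u}) = frank.{u} hl [] + 2
        from rfl]
      rw [hcompl]
      exact hnil

/-! ### (1) → (4) -/

section OneFour

attribute [local instance] Classical.propDecidable

variable (Fc Oc : ℕ → Set (ℕ → C))

/-- the cylinder of `s` is inside `Oc j` -/
def PinP (j : ℕ) (s : List C) : Prop := ∀ σ : ℕ → C, pref σ s.length = s → σ ∈ Oc j

/-- the cylinder of `s` misses `Fc j` -/
def PoutP (j : ℕ) (s : List C) : Prop := ∀ σ : ℕ → C, pref σ s.length = s → σ ∉ Fc j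

lemma exists_pin_or_pout (hcl : ∀ j, IsClosed[seqTop C] (Fc j))
    (hop : ∀ j, IsOpen[seqTop C] (Oc j)) (hsub : ∀ j, Fc j ⊆ Oc j) (j : ℕ) (ρ : ℕ → C) :
    ∃ m, PinP Oc j (pref ρ m) ∨ PoutP Fc j (pref ρ m) := by
  by_cases hρ : ρ ∈ Oc j
  · obtain ⟨m, hm⟩ := pref_of_isOpen (hop j) ρ hρ
    refine ⟨m, Or.inl fun σ hσ => hm σ ?_⟩
    rwa [length_pref] at hσ
  · have hρF : ρ ∈ (Fc j)ᶜ := fun hF => hρ (hsub j hF)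
    have hopc : IsOpen[seqTop C] (Fc j)ᶜ := by
      letI := seqTop C
      exact (hcl j).isOpen_compl
    obtain ⟨m, hm⟩ := pref_of_isOpen hopc ρ hρF
    refine ⟨m, Or.inr fun σ hσ => hm σ ?_⟩
    rwa [length_pref] at hσ

variable {Fc Oc}
variable (h : ∀ j ρ, ∃ m, PinP Oc j (pref ρ m) ∨ PoutP Fc j (pref ρ m))

/-- clopen approximation of `S` between `Fc j` and `Oc j` -/
def Aj (j : ℕ) : Set (ℕ → C) := {ρ | PinP Oc j (pref ρ (Nat.find (h j ρ)))}

lemma find_eq_of_pref {j : ℕ} {ρ σ : ℕ → C}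
    (hσ : pref σ (Nat.find (h j ρ)) = pref ρ (Nat.find (h j ρ))) :
    Nat.find (h j σ) = Nat.find (h j ρ) := by
  apply le_antisymm
  · apply Nat.find_le
    rw [hσ]
    exact Nat.find_spec (h j ρ)
  · rw [Nat.le_find_iff]
    intro m hm
    rw [pref_eq_of_le hm.le hσ]
    exact Nat.find_min (h j ρ) hm

lemma mem_Aj_iff_of_pref {j : ℕ} {ρ σ : ℕ → C}
    (hσ : pref σ (Nat.find (h j ρ)) = pref ρ (Nat.find (h j ρ))) :
    σ ∈ Aj h j ↔ ρ ∈ Aj h j := by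
  unfold Aj
  rw [Set.mem_setOf_eq, Set.mem_setOf_eq, find_eq_of_pref h hσ, hσ]

lemma Fc_subset_Aj (j : ℕ) : Fc j ⊆ Aj h j := by
  intro ρ hρ
  rcases Nat.find_spec (h j ρ) with hin | hout
  · exact hin
  · exact absurd (hout ρ (by rw [length_pref])) (by simpa using hρ)

lemma Aj_subset_Oc (j : ℕ) : Aj h j ⊆ Oc j := by
  intro ρ hρ
  exact hρ ρ (by rw [length_pref])

/-- the cylinder of `s` decides membership in `Aj j` -/
def DecP (s : List C) (j : ℕ) : Prop :=
  ∀ σ τ : ℕ → C, pref σ s.length = s → pref τ s.length = s → (σ ∈ Aj h j ↔ τ ∈ Aj h j)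

lemma decP_mono {ρ : ℕ → C} {m m' : ℕ} (hmm : m ≤ m') {j : ℕ}
    (hd : DecP h (pref ρ m) j) : DecP h (pref ρ m') j := by
  intro σ τ hσ hτ
  rw [length_pref] at hσ hτ
  refine hd σ τ ?_ ?_ <;> rw [length_pref]
  · exact pref_eq_of_le hmm hσ
  · exact pref_eq_of_le hmm hτ

lemma eventually_decP (j : ℕ) (ρ : ℕ → C) :
    ∀ m, Nat.find (h j ρ) ≤ m → DecP h (pref ρ m) j := by
  intro m hm σ τ hσ hτ
  rw [length_pref] at hσ hτ
  rw [mem_Aj_iff_of_pref h (pref_eq_of_le hm hσ),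
    mem_Aj_iff_of_pref h (pref_eq_of_le hm hτ)]

lemma eventually_decP_lt (ρ : ℕ → C) (K : ℕ) :
    ∃ M, ∀ m, M ≤ m → ∀ j < K, DecP h (pref ρ m) j := by
  induction K with
  | zero => exact ⟨0, fun m _ j hj => absurd hj (by omega)⟩
  | succ K IH =>
    obtain ⟨M, hM⟩ := IH
    refine ⟨max M (Nat.find (h K ρ)), fun m hm j hj => ?_⟩
    rcases Nat.lt_or_ge j K with h' | h'
    · exact hM m (le_trans (le_max_left _ _) hm) j h'
    · have hjK : j = K := by omega
      subst hjK
      exact eventually_decP h j ρ m (le_trans (le_max_right _ _) hm)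

/-- the first undecided index (capped at the length) -/
def kfun (s : List C) : ℕ := Nat.find (⟨s.length, Or.inl rfl⟩ : ∃ j, j = s.length ∨ ¬ DecP h s j)

lemma kfun_decided {s : List C} {j : ℕ} (hj : j < kfun h s) : DecP h s j := by
  have := Nat.find_min _ hj
  push_neg at this
  exact this.2

lemma le_kfun {ρ : ℕ → C} {m K : ℕ} (hK : K ≤ m) (hdec : ∀ j < K, DecP h (pref ρ m) j) :
    K ≤ kfun h (pref ρ m) := by
  rw [kfun, Nat.le_find_iff]
  intro j hj
  push_neg
  rw [length_pref]
  exact ⟨by omega, hdec j hj⟩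

/-- the labelling function -/
def labl (s : List C) : Bool :=
  decide (0 < kfun h s ∧ ∀ σ : ℕ → C, pref σ s.length = s → σ ∈ Aj h (kfun h s - 1))

/-- main pointwise computation: eventually, the label of `pref ρ m` records whether
`ρ` belongs to `Aj j` for all large `j`. -/
lemma labl_eventually {ρ : ℕ → C} {j₀ : ℕ} {b : Bool}
    (hb : ∀ j, j₀ ≤ j → (ρ ∈ Aj h j ↔ b = true)) :
    ∃ M, ∀ m, M ≤ m → labl h (pref ρ m) = b := by
  obtain ⟨M, hM⟩ := eventually_decP_lt h ρ (j₀ + 1)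
  refine ⟨max M (j₀ + 1), fun m hm => ?_⟩
  have hMm : M ≤ m := le_trans (le_max_left _ _) hm
  have hj₀m : j₀ + 1 ≤ m := le_trans (le_max_right _ _) hm
  have hk : j₀ + 1 ≤ kfun h (pref ρ m) :=
    le_kfun h hj₀m (fun j hj => hM m hMm j hj)
  have hdec : DecP h (pref ρ m) (kfun h (pref ρ m) - 1) :=
    kfun_decided h (by omega)
  have hρself : pref ρ (pref ρ m).length = pref ρ m := by rw [length_pref]
  have hiff : (∀ σ : ℕ → C, pref σ (pref ρ m).length = pref ρ m →
      σ ∈ Aj h (kfun h (pref ρ m) - 1)) ↔ ρ ∈ Aj h (kfun h (pref ρ m) - 1) := by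
    constructor
    · intro hσ
      exact hσ ρ hρself
    · intro hρA σ hσ
      exact (hdec σ ρ hσ hρself).2 hρA
  have hval : ρ ∈ Aj h (kfun h (pref ρ m) - 1) ↔ b = true := hb _ (by omega)
  rw [labl]
  cases b
  · simp only [decide_eq_false_iff_not]
    rintro ⟨-, hall⟩
    have := hval.1 (hiff.1 hall)
    simp at this
  · simp only [decide_eq_true_eq]
    exact ⟨by omega, hiff.2 (hval.2 rfl)⟩

end OneFour

lemma imp_1_4 {S : Set (ℕ → C)}
    (h : (∃ F : ℕ → Set (ℕ → C), (∀ n, IsClosed[seqTop C] (F n)) ∧ S = ⋃ n, F n) ∧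
         (∃ O : ℕ → Set (ℕ → C), (∀ n, IsOpen[seqTop C] (O n)) ∧ S = ⋂ n, O n)) :
    ∃ l : List C → Bool, EventuallyConstantLabel l ∧ S = OneSet l := by
  classical
  obtain ⟨⟨F, hFcl, hFS⟩, ⟨O, hOop, hOS⟩⟩ := h
  -- monotonized versions
  set Fc : ℕ → Set (ℕ → C) := fun n => ⋃ k ∈ Finset.range (n + 1), F k with hFc
  set Oc : ℕ → Set (ℕ → C) := fun n => ⋂ k ∈ Finset.range (n + 1), O k with hOc
  have hcl : ∀ j, IsClosed[seqTop C] (Fc j) := fun j => by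
    letI := seqTop C
    exact Set.Finite.isClosed_biUnion (Finset.finite_toSet _) (fun k _ => hFcl k)
  have hop : ∀ j, IsOpen[seqTop C] (Oc j) := fun j => by
    letI := seqTop C
    exact isOpen_biInter_finset (fun k _ => hOop k)
  have hFcS : ∀ j, Fc j ⊆ S := by
    intro j ρ hρ
    simp only [hFc, Set.mem_iUnion] at hρ
    obtain ⟨k, _, hk⟩ := hρ
    rw [hFS]
    exact Set.mem_iUnion.2 ⟨k, hk⟩
  have hSOc : ∀ j, S ⊆ Oc j := by
    intro j ρ hρ
    simp only [hOc, Set.mem_iInter]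
    intro k _
    rw [hOS] at hρ
    exact Set.mem_iInter.1 hρ k
  have hsub : ∀ j, Fc j ⊆ Oc j := fun j => (hFcS j).trans (hSOc j)
  have hhyp := exists_pin_or_pout Fc Oc hcl hop hsub
  -- eventual stabilization of membership in the approximations
  have hstab : ∀ ρ : ℕ → C, ∃ j₀, ∀ j, j₀ ≤ j →
      (ρ ∈ Aj hhyp j ↔ ρ ∈ S) := by
    intro ρ
    by_cases hρ : ρ ∈ S
    · rw [hFS] at hρ
      obtain ⟨k, hk⟩ := Set.mem_iUnion.1 hρ
      refine ⟨k, fun j hj => iff_of_true (Fc_subset_Aj hhyp j ?_) ((hFS ▸ hρ : ρ ∈ S))⟩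
      simp only [hFc, Set.mem_iUnion]
      exact ⟨k, Finset.mem_range.2 (by omega), hk⟩
    · have hρ' : ρ ∉ ⋂ n, O n := by rwa [← hOS]
      obtain ⟨k, hk⟩ : ∃ k, ρ ∉ O k := by
        by_contra hc
        push_neg at hc
        exact hρ' (Set.mem_iInter.2 hc)
      refine ⟨k, fun j hj => iff_of_false (fun hA => ?_) hρ⟩
      have := Aj_subset_Oc hhyp j hA
      simp only [hOc, Set.mem_iInter] at this
      exact hk (this k (Finset.mem_range.2 (by omega)))
  refine ⟨labl hhyp, ?_, ?_⟩
  · intro ρ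
    obtain ⟨j₀, hj₀⟩ := hstab ρ
    by_cases hρ : ρ ∈ S
    · obtain ⟨M, hM⟩ := labl_eventually hhyp
        (b := true) (fun j hj => (hj₀ j hj).trans (iff_of_true hρ rfl))
      exact ⟨M, fun m hm => by rw [hM m hm, hM M le_rfl]⟩
    · obtain ⟨M, hM⟩ := labl_eventually hhyp
        (b := false) (fun j hj => (hj₀ j hj).trans (iff_of_false hρ (by simp)))
      exact ⟨M, fun m hm => by rw [hM m hm, hM M le_rfl]⟩
  · ext ρ
    obtain ⟨j₀, hj₀⟩ := hstab ρ
    by_cases hρ : ρ ∈ S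
    · obtain ⟨M, hM⟩ := labl_eventually hhyp
        (b := true) (fun j hj => (hj₀ j hj).trans (iff_of_true hρ rfl))
      refine iff_of_true hρ fun N => ⟨max N M, le_max_left _ _, hM _ (le_max_right _ _)⟩
    · obtain ⟨M, hM⟩ := labl_eventually hhyp
        (b := false) (fun j hj => (hj₀ j hj).trans (iff_of_false hρ (by simp)))
      refine iff_of_false hρ fun hOne => ?_
      obtain ⟨n, hn, htrue⟩ := hOne M
      rw [hM n hn] at htrue
      exact Bool.false_ne_true htrue

/-! ### (3) → (1) -/

/-- the class `Δ⁰₂` with countable witnesses -/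
def Delta02 (S : Set (ℕ → C)) : Prop :=
  (∃ F : ℕ → Set (ℕ → C), (∀ n, IsClosed[seqTop C] (F n)) ∧ S = ⋃ n, F n) ∧
    (∃ O : ℕ → Set (ℕ → C), (∀ n, IsOpen[seqTop C] (O n)) ∧ S = ⋂ n, O n)

lemma delta02_compl {S : Set (ℕ → C)} (h : Delta02 S) : Delta02 Sᶜ := by
  obtain ⟨⟨F, hF, hFS⟩, ⟨O, hO, hOS⟩⟩ := h
  letI := seqTop C
  constructor
  · refine ⟨fun n => (O n)ᶜ, fun n => (hO n).isClosed_compl, ?_⟩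
    rw [hOS, Set.compl_iInter]
  · refine ⟨fun n => (F n)ᶜ, fun n => (hF n).isOpen_compl, ?_⟩
    rw [hFS, Set.compl_iUnion]

lemma delta02_open {S : Set (ℕ → C)} (h : IsOpen[seqTop C] S) : Delta02 S := by
  letI := seqTop C
  constructor
  · refine ⟨fun n => {ρ | ∀ σ, pref σ n = pref ρ n → σ ∈ S}, fun n => ?_, ?_⟩
    · rw [← isOpen_compl_iff]
      refine isOpen_prefDet _ n fun ρ hρ σ hσ hmem => ?_
      exact hρ fun τ hτ => hmem τ (hτ.trans hσ.symm)
    · ext ρ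
      simp only [Set.mem_iUnion, Set.mem_setOf_eq]
      constructor
      · intro hρ
        obtain ⟨n, hn⟩ := pref_of_isOpen h ρ hρ
        exact ⟨n, hn⟩
      · rintro ⟨n, hn⟩
        exact hn ρ rfl
  · exact ⟨fun _ => S, fun _ => h, (Set.iInter_const S).symm⟩

lemma delta02_iUnion {I : Type} (T O : I → Set (ℕ → C)) (hO : ∀ i, IsOpen[seqTop C] (O i))
    (hd : Pairwise fun i j => Disjoint (O i) (O j)) (hTO : ∀ i, T i ⊆ O i)
    (hT : ∀ i, Delta02 (T i)) : Delta02 (⋃ i, T i) := by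
  letI := seqTop C
  obtain ⟨F, hFcl, hFeq⟩ : ∃ F : I → ℕ → Set (ℕ → C),
      (∀ i n, IsClosed (F i n)) ∧ ∀ i, T i = ⋃ n, F i n := by
    choose F h1 h2 using fun i => (hT i).1
    exact ⟨F, h1, h2⟩
  obtain ⟨U, hUop, hUeq⟩ : ∃ U : I → ℕ → Set (ℕ → C),
      (∀ i n, IsOpen (U i n)) ∧ ∀ i, T i = ⋂ n, U i n := by
    choose U h1 h2 using fun i => (hT i).2
    exact ⟨U, h1, h2⟩
  constructor
  · -- countable union of closed sets
    set G : I → ℕ → Set (ℕ → C) :=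
      fun i m => {ρ | ∀ σ, pref σ m = pref ρ m → σ ∈ O i} with hG
    have hGdet : ∀ i m (ρ σ : ℕ → C), pref σ m = pref ρ m → ρ ∈ G i m → σ ∈ G i m := by
      intro i m ρ σ hσ hρ τ hτ
      exact hρ τ (hτ.trans hσ)
    have hGop : ∀ i m, IsOpen (G i m) := by
      intro i m
      exact isOpen_prefDet _ m fun ρ hρ σ hσ => hGdet i m ρ σ hσ hρ
    have hGsub : ∀ i m, G i m ⊆ O i := fun i m ρ hρ => hρ ρ rfl
    have hGdisj : ∀ (i j : I) (m : ℕ), i ≠ j → Disjoint (G i m) (G j m) := by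
      intro i j m hij
      rw [Set.disjoint_left]
      intro ρ hρi hρj
      exact Set.disjoint_left.1 (hd hij) (hGsub i m hρi) (hGsub j m hρj)
    set H : ℕ → ℕ → Set (ℕ → C) := fun n m => ⋃ i, (F i n ∩ G i m) with hH
    have hHcl : ∀ n m, IsClosed (H n m) := by
      intro n m
      rw [← isOpen_compl_iff, isOpen_iff_forall_mem_open]
      intro ρ hρ
      rw [Set.mem_compl_iff, hH, Set.mem_iUnion] at hρ
      push_neg at hρ
      by_cases hGρ : ∃ i, ρ ∈ G i m
      · obtain ⟨j, hj⟩ := hGρ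
        refine ⟨G j m ∩ (F j n)ᶜ, ?_, (hGop j m).inter (hFcl j n).isOpen_compl,
          hj, fun hF => (hρ j) ⟨hF, hj⟩⟩
        intro σ hσ
        rw [Set.mem_compl_iff, hH, Set.mem_iUnion]
        push_neg
        intro i hi
        have hij : i = j := by
          by_contra hij
          exact Set.disjoint_left.1 (hGdisj i j m hij) hi.2 hσ.1
        subst hij
        exact hσ.2 hi.1
      · refine ⟨{σ | pref σ m = pref ρ m}, ?_, ?_, rfl⟩
        · intro σ hσ
          rw [Set.mem_compl_iff, hH, Set.mem_iUnion]
          push_neg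
          intro i hi
          exact hGρ ⟨i, hGdet i m σ ρ hσ.symm hi.2⟩
        · exact isOpen_prefDet _ m fun τ hτ σ hσ => hσ.trans hτ
    refine ⟨fun k => H (Nat.unpair k).1 (Nat.unpair k).2, fun k => hHcl _ _, ?_⟩
    ext ρ
    simp only [Set.mem_iUnion]
    constructor
    · rintro ⟨i, hi⟩
      obtain ⟨n, hn⟩ : ∃ n, ρ ∈ F i n := by
        have := hi
        rw [hFeq i] at this
        exact Set.mem_iUnion.1 this
      obtain ⟨m, hm⟩ := pref_of_isOpen (hO i) ρ (hTO i hi)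
      refine ⟨Nat.pair n m, ?_⟩
      rw [Nat.unpair_pair]
      exact Set.mem_iUnion.2 ⟨i, hn, hm⟩
    · rintro ⟨k, hk⟩
      obtain ⟨i, hi⟩ := Set.mem_iUnion.1 hk
      refine ⟨i, ?_⟩
      rw [hFeq i]
      exact Set.mem_iUnion.2 ⟨_, hi.1⟩
  · -- countable intersection of open sets
    refine ⟨fun n => ⋃ i, (U i n ∩ O i), fun n => isOpen_iUnion fun i => (hUop i n).inter (hO i), ?_⟩
    ext ρ
    simp only [Set.mem_iUnion, Set.mem_iInter]
    constructor
    · rintro ⟨i, hi⟩ n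
      refine ⟨i, ?_, hTO i hi⟩
      have := hi
      rw [hUeq i] at this
      exact Set.mem_iInter.1 this n
    · intro hρ
      choose j hjU hjO using hρ
      refine ⟨j 0, ?_⟩
      have hsame : ∀ n, j n = j 0 := by
        intro n
        by_contra hne
        exact Set.disjoint_left.1 (hd hne) (hjO n) (hjO 0)
      rw [hUeq (j 0)]
      refine Set.mem_iInter.2 fun n => ?_
      rw [← hsame n]
      exact hjU n

lemma imp_3_1 {S : Set (ℕ → C)} (h : ∃ θ : Ordinal.{u}, S ∈ FineLambda C θ) :
    Delta02 S := by
  obtain ⟨θ, hS⟩ := h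
  induction θ using Ordinal.induction generalizing S with
  | h θ IH =>
  rw [FineLambda] at hS
  split_ifs at hS with h1 h2
  · exact delta02_open hS
  · obtain ⟨I, T, O, η, hO, hd, hTO, rfl, hmem⟩ := hS
    refine delta02_iUnion T O hO hd hTO fun i => ?_
    rcases hmem i with hm | hm
    · exact IH (η i) (η i).2 hm
    · have := delta02_compl (IH (η i) (η i).2 hm)
      rwa [compl_compl] at this
  · exact absurd hS (Set.notMem_empty S)

end HD

/-- Equivalence of the four representations of `Δ⁰₂` subsets of `C^ω`. -/
theorem statement2 (C : Type) (S : Set (ℕ → C)) :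
    List.TFAE
      [(∃ F : ℕ → Set (ℕ → C), (∀ n, IsClosed[seqTop C] (F n)) ∧ S = ⋃ n, F n) ∧
         (∃ O : ℕ → Set (ℕ → C), (∀ n, IsOpen[seqTop C] (O n)) ∧ S = ⋂ n, O n),
       ∃ θ : Ordinal, S ∈ Dclass C θ,
       ∃ θ : Ordinal, S ∈ FineLambda C θ,
       ∃ l : List C → Bool, EventuallyConstantLabel l ∧ S = OneSet l] := by
  tfae_have 1 → 4 := fun h => HD.imp_1_4 h
  tfae_have 4 → 2 := fun h => HD.imp_4_2 h
  tfae_have 2 → 4 := fun h => HD.imp_2_4 h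
  tfae_have 4 → 3 := fun h => HD.imp_4_3 h
  tfae_have 3 → 1 := fun h => HD.imp_3_1 h
  tfae_finish
end
end

section
/- Let A and B be finite nonempty sets and let W ⊆ (A×B)^ω be an open set for the product topology. If the empty history belongs to Γ (equivalently, Player 1 has a winning strategy from the empty history), then Player 1 has a finite-memory winning strategy from the empty history. -/
open Set Topology

noncomputable section

/-- Concatenation of a finite history and an infinite play. -/
def catSeq {C : Type} (h : List C) (ρ : ℕ → C) : ℕ → C := fun n =>
  if hn : n < h.length then h.get ⟨n, hn⟩ else ρ (n - h.length)

/-- `W_h = {ρ : hρ ∈ W}`, the winning set induced by the history `h`. -/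
def WinAfter {A B : Type} (W : Set (ℕ → A × B)) (h : List (A × B)) : Set (ℕ → A × B) :=
  {ρ | catSeq h ρ ∈ W}

/-- Finite prefixes of the outcome `out(h,s,β)`: after `h`, Player 1 follows `s`
and Player 2 plays the successive letters of `β`. -/
def outPrefix {A B : Type} (h : List (A × B)) (s : List (A × B) → A) (β : ℕ → B) :
    ℕ → List (A × B)
  | 0 => h
  | n + 1 => outPrefix h s β n ++ [(s (outPrefix h s β n), β n)]

/-- The outcome `out(h,s,β)`. -/
def out {A B : Type} (h : List (A × B)) (s : List (A × B) → A) (β : ℕ → B) : ℕ → A × B :=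
  fun n =>
    if hn : n < h.length then h.get ⟨n, hn⟩
    else (s (outPrefix h s β (n - h.length)), β (n - h.length))

/-- `s` is a winning strategy (for Player 1) from the history `h`. -/
def WinningFrom {A B : Type} (W : Set (ℕ → A × B)) (s : List (A × B) → A)
    (h : List (A × B)) : Prop :=
  ∀ β : ℕ → B, out h s β ∈ W

/-- `h` is a winning history: some strategy is winning from `h`. -/
def WinningHistory {A B : Type} (W : Set (ℕ → A × B)) (h : List (A × B)) : Prop :=
  ∃ s, WinningFrom W s h

/-- The action `a` is non-losing at the history `h`. -/
def NonLosing {A B : Type} (W : Set (ℕ → A × B)) (h : List (A × B)) (a : A) : Prop :=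
  ∀ b : B, WinningHistory W (h ++ [(a, b)])

/-- `Γ`: the set of histories along which Player 1 has only played non-losing actions
(in particular `ε ∈ Γ` requires `ε` to be a winning history). -/
def Gamma {A B : Type} (W : Set (ℕ → A × B)) : Set (List (A × B)) :=
  {h | WinningHistory W ([] : List (A × B)) ∧
    ∀ k (hk : k < h.length), NonLosing W (h.take k) (h.get ⟨k, hk⟩).1}

/-- `s` is a finite-memory strategy: it is induced by a finite-memory decision machine
`(M, σ, μ, m₀)`. -/
def FiniteMemory {A B : Type} (s : List (A × B) → A) : Prop :=
  ∃ (M : Type) (_ : Fintype M) (σ : M → A) (μ : M → A × B → M) (m₀ : M),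
    ∀ h : List (A × B), s h = σ (h.foldl μ m₀)

lemma outPrefix_length {A B : Type} (h : List (A × B)) (s : List (A × B) → A) (β : ℕ → B) :
    ∀ k, (outPrefix h s β k).length = h.length + k
  | 0 => rfl
  | k + 1 => by
    simp [outPrefix, outPrefix_length h s β k, Nat.add_assoc]

lemma outPrefix_congr {A B : Type} (s s' : List (A × B) → A) (β β' : ℕ → B) (m : ℕ)
    (hs : ∀ h : List (A × B), h.length < m → s h = s' h)
    (hβ : ∀ i, i < m → β i = β' i) :
    ∀ k, k ≤ m → outPrefix [] s β k = outPrefix [] s' β' k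
  | 0, _ => rfl
  | k + 1, hk => by
    have ih := outPrefix_congr s s' β β' m hs hβ k (by omega)
    have hlen : (outPrefix ([] : List (A × B)) s' β' k).length = k := by
      simpa using outPrefix_length [] s' β' k
    simp only [outPrefix]
    rw [ih, hs _ (by omega), hβ k (by omega)]

lemma out_congr {A B : Type} (s s' : List (A × B) → A) (β β' : ℕ → B) (m : ℕ)
    (hs : ∀ h : List (A × B), h.length < m → s h = s' h)
    (hβ : ∀ i, i < m → β i = β' i) (i : ℕ) (hi : i < m) :
    out [] s β i = out [] s' β' i := by
  have hlen : (outPrefix ([] : List (A × B)) s β i).length = i := by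
    simpa using outPrefix_length [] s β i
  simp only [out, List.length_nil, Nat.not_lt_zero, dite_false, Nat.sub_zero]
  rw [outPrefix_congr s s' β β' m hs hβ i (le_of_lt hi)]
  have hlen' : (outPrefix ([] : List (A × B)) s' β' i).length = i := by
    simpa using outPrefix_length [] s' β' i
  rw [hs _ (by omega), hβ i hi]

lemma open_cylinder {A B : Type} (W : Set (ℕ → A × B))
    (hW : IsOpen[seqTop (A × B)] W) (ρ : ℕ → A × B) (hρ : ρ ∈ W) :
    ∃ N, ∀ ρ' : ℕ → A × B, (∀ i, i < N → ρ' i = ρ i) → ρ' ∈ W := by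
  letI : TopologicalSpace (A × B) := ⊥
  have hW' : IsOpen W := hW
  rw [isOpen_pi_iff] at hW'
  obtain ⟨I, u, hu, hsub⟩ := hW' ρ hρ
  refine ⟨(I.sup id) + 1, fun ρ' hρ' => hsub ?_⟩
  intro i hi
  rw [hρ' i (by have := Finset.le_sup (f := id) hi; simp at this; omega)]
  exact (hu i hi).2

/-- If `W` is an open set and the empty history belongs to `Γ`, then Player 1 has a
finite-memory winning strategy from the empty history. -/
theorem statement6 {A B : Type} [Fintype A] [Fintype B] [Nonempty A] [Nonempty B]
    (W : Set (ℕ → A × B)) (hW : IsOpen[seqTop (A × B)] W)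
    (hε : ([] : List (A × B)) ∈ Gamma W) :
    ∃ s : List (A × B) → A, FiniteMemory s ∧ WinningFrom W s [] := by
  obtain ⟨⟨s, hs⟩, -⟩ := hε
  have key : ∀ β : ℕ → B, ∃ N, ∀ ρ' : ℕ → A × B,
      (∀ i, i < N → ρ' i = out [] s β i) → ρ' ∈ W :=
    fun β => open_cylinder W hW _ (hs β)
  choose N hN using key
  letI : TopologicalSpace B := ⊥
  haveI : DiscreteTopology B := ⟨rfl⟩
  set U : (ℕ → B) → Set (ℕ → B) :=
    fun β => (↑(Finset.range (N β)) : Set ℕ).pi (fun i => {β i}) with hU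
  have hUopen : ∀ β, IsOpen (U β) :=
    fun β => isOpen_set_pi (Finset.finite_toSet _) (fun i _ => isOpen_discrete _)
  have hUmem : ∀ β β' : ℕ → B, β' ∈ U β ↔ ∀ i, i < N β → β' i = β i := by
    intro β β'; simp [hU, Set.mem_pi]
  have hcover : (Set.univ : Set (ℕ → B)) ⊆ ⋃ β, U β := fun β _ =>
    Set.mem_iUnion.2 ⟨β, (hUmem β β).2 (fun _ _ => rfl)⟩
  obtain ⟨t, ht⟩ := isCompact_univ.elim_finite_subcover U hUopen hcover
  set n : ℕ := t.sup N with hn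
  set s' : List (A × B) → A := fun h => s (h.take n) with hs'
  have hs'_eq : ∀ h : List (A × B), h.length < n → s' h = s h := by
    intro h hh
    simp only [hs']
    rw [List.take_of_length_le (by omega)]
  refine ⟨s', ?_, ?_⟩
  · -- finite memory
    set M := {l : List (A × B) // l.length ≤ n} with hM
    haveI : Finite M := (List.finite_length_le (A × B) n).to_subtype
    set μ : M → A × B → M := fun l c =>
      if h : l.val.length < n then ⟨l.val ++ [c], by simp; omega⟩ else l with hμ
    set m₀ : M := ⟨[], by simp⟩ with hm₀
    have hfold : ∀ h : List (A × B), (h.foldl μ m₀).val = h.take n := by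
      intro h
      induction h using List.reverseRecOn with
      | nil => simp [hm₀]
      | append_singleton h c ih =>
        rw [List.foldl_append, List.foldl_cons, List.foldl_nil]
        by_cases hc : h.length < n
        · have hlen : (h.foldl μ m₀).val.length < n := by
            rw [ih, List.take_of_length_le (by omega)]; omega
          have : μ (h.foldl μ m₀) c = ⟨(h.foldl μ m₀).val ++ [c], by
              simp [hlen.le]; omega⟩ := dif_pos hlen
          rw [this]
          simp only [ih]
          rw [List.take_of_length_le (by omega), List.take_of_length_le (by simp; omega)]
        · have hlen : ¬ (h.foldl μ m₀).val.length < n := by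
            rw [ih, List.length_take]; omega
          have : μ (h.foldl μ m₀) c = h.foldl μ m₀ := dif_neg hlen
          rw [this, ih, List.take_append]
          simp [Nat.sub_eq_zero_of_le (le_of_not_gt hc)]
    exact ⟨M, Fintype.ofFinite M, fun l => s l.val, μ, m₀,
      fun h => by simp only [hs', hfold h]⟩
  · intro β
    obtain ⟨β₀, hβ₀⟩ := Set.mem_iUnion.1 (ht (Set.mem_univ β))
    simp only [Set.mem_iUnion, exists_prop] at hβ₀
    obtain ⟨hβ₀t, hβU⟩ := hβ₀
    have hNle : N β₀ ≤ n := Finset.le_sup hβ₀t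
    have hagree := (hUmem β₀ β).1 hβU
    apply hN β₀
    intro i hi
    rw [out_congr s' s β β n hs'_eq (fun _ _ => rfl) i (lt_of_lt_of_le hi hNle)]
    exact out_congr s s β β₀ (N β₀) (fun _ _ => rfl) hagree i hi
end
end

section
/- Let A and B be finite nonempty sets and let W ⊆ (A×B)^ω be a closed set for the product topology. Assume that set inclusion induces a well partial order on the family {W_h : h ∈ Γ}, i.e. for every sequence (h_n)_{n∈ℕ} of histories in Γ there exist k < l with W_{h_k} ⊆ W_{h_l}. If the empty history belongs to Γ, then Player 1 has a finite-memory winning strategy from the empty history. -/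
open Set Topology

noncomputable section

-- AUX
def consSeq {C : Type} (c : C) (ρ : ℕ → C) : ℕ → C := fun n => if n = 0 then c else ρ (n - 1)

lemma catSeq_nil {C : Type} (ρ : ℕ → C) : catSeq [] ρ = ρ := by
  funext n; simp [catSeq]

lemma catSeq_concat {C : Type} (h : List C) (c : C) (ρ : ℕ → C) :
    catSeq (h ++ [c]) ρ = catSeq h (consSeq c ρ) := by
  funext n
  simp only [catSeq, consSeq, List.length_append, List.length_singleton, List.get_eq_getElem]
  rcases lt_trichotomy n h.length with h1 | h1 | h1
  · rw [dif_pos (by omega), dif_pos h1, List.getElem_append_left h1]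
  · subst h1
    rw [dif_pos (by omega), dif_neg (by omega), if_pos (by omega),
      List.getElem_append_right (le_refl _)]
    simp
  · rw [dif_neg (by omega), dif_neg (by omega), if_neg (by omega)]
    congr 1
    all_goals omega

lemma winAfter_concat {A B : Type} (W : Set (ℕ → A × B)) (h : List (A × B)) (c : A × B) :
    WinAfter W (h ++ [c]) = {ρ | consSeq c ρ ∈ WinAfter W h} := by
  ext ρ; simp only [WinAfter, Set.mem_setOf_eq, catSeq_concat]

lemma winAfter_nil {A B : Type} (W : Set (ℕ → A × B)) : WinAfter W [] = W := by
  ext ρ; simp [WinAfter, catSeq_nil]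

lemma outPrefix_succ_eq {A B : Type} (h : List (A × B)) (s : List (A × B) → A) (b : B)
    (β : ℕ → B) (n : ℕ) :
    outPrefix h s (consSeq b β) (n + 1) = outPrefix (h ++ [(s h, b)]) s β n := by
  induction n with
  | zero => simp [outPrefix, consSeq]
  | succ n ih =>
    show outPrefix h s (consSeq b β) (n+1) ++ _ = outPrefix (h ++ [(s h, b)]) s β n ++ _
    rw [ih]
    congr 2
    all_goals simp [consSeq]

lemma out_concat {A B : Type} (h : List (A × B)) (s : List (A × B) → A) (b : B) (β : ℕ → B) :
    out (h ++ [(s h, b)]) s β = out h s (consSeq b β) := by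
  funext n
  simp only [out, List.length_append, List.length_singleton, List.get_eq_getElem]
  rcases lt_trichotomy n h.length with h1 | h1 | h1
  · rw [dif_pos (by omega), dif_pos h1, List.getElem_append_left h1]
  · subst h1
    rw [dif_pos (by omega), dif_neg (by omega)]
    have : h.length - h.length = 0 := by omega
    rw [this, List.getElem_append_right (le_refl _)]
    simp [outPrefix, consSeq]
  · rw [dif_neg (by omega), dif_neg (by omega)]
    have e1 : n - h.length = (n - (h.length + 1)) + 1 := by omega
    rw [e1, outPrefix_succ_eq]
    simp [consSeq]

lemma exists_nonLosing {A B : Type} (W : Set (ℕ → A × B)) (h : List (A × B))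
    (hw : WinningHistory W h) : ∃ a, NonLosing W h a := by
  obtain ⟨s, hs⟩ := hw
  refine ⟨s h, fun b => ⟨s, fun β => ?_⟩⟩
  rw [out_concat]
  exact hs _

lemma winAfter_nonempty {A B : Type} [Nonempty B] (W : Set (ℕ → A × B)) (h : List (A × B))
    (hw : WinningHistory W h) : (WinAfter W h).Nonempty := by
  obtain ⟨s, hs⟩ := hw
  obtain ⟨b⟩ := ‹Nonempty B›
  refine ⟨fun n => out h s (fun _ => b) (n + h.length), ?_⟩
  have : catSeq h (fun n => out h s (fun _ => b) (n + h.length)) = out h s (fun _ => b) := by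
    funext n
    simp only [catSeq]
    split
    · simp only [out]; rw [dif_pos ‹_›]
    · have : n - h.length + h.length = n := by omega
      rw [this]
  simpa [WinAfter, this] using hs (fun _ => b)

lemma gamma_winning {A B : Type} (W : Set (ℕ → A × B)) (h : List (A × B))
    (hg : h ∈ Gamma W) : WinningHistory W h := by
  rcases List.eq_nil_or_concat h with rfl | ⟨l, c, rfl⟩
  · exact hg.1
  · simp only [List.concat_eq_append] at hg
    have hk : l.length < (l ++ [c]).length := by simp
    have := hg.2 l.length hk
    rw [List.take_left] at this
    have hget : ((l ++ [c]).get ⟨l.length, hk⟩) = c := by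
      simp [List.get_eq_getElem]
    rw [hget] at this
    have := this c.2
    simpa using this

lemma gamma_concat {A B : Type} (W : Set (ℕ → A × B)) (h : List (A × B)) (a : A) (b : B)
    (hg : h ∈ Gamma W) (ha : NonLosing W h a) : h ++ [(a, b)] ∈ Gamma W := by
  refine ⟨hg.1, fun k hk => ?_⟩
  simp only [List.length_append, List.length_singleton] at hk
  rcases lt_or_ge k h.length with h1 | h1
  · have ht : (h ++ [(a,b)]).take k = h.take k := List.take_append_of_le_length (by omega)
    have hgt : ((h ++ [(a,b)]).get ⟨k, by simp; omega⟩) = h.get ⟨k, h1⟩ := by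
      simp [List.get_eq_getElem, List.getElem_append_left h1]
    rw [ht, hgt]
    exact hg.2 k h1
  · have h2 : k = h.length := by omega
    subst h2
    have ht : (h ++ [(a,b)]).take h.length = h := List.take_left
    have hgt : ((h ++ [(a,b)]).get ⟨h.length, by simp⟩) = (a, b) := by
      simp [List.get_eq_getElem]
    rw [ht, hgt]
    exact ha

lemma mem_of_prefixes {C : Type} (W : Set (ℕ → C)) (hW : IsClosed[seqTop C] W) (ρ : ℕ → C)
    (H : ∀ n : ℕ, ∃ w ∈ W, ∀ k < n, w k = ρ k) : ρ ∈ W := by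
  letI : TopologicalSpace C := ⊥
  haveI : DiscreteTopology C := ⟨rfl⟩
  letI : TopologicalSpace (ℕ → C) := Pi.topologicalSpace
  have hW' : IsClosed W := hW
  have : ρ ∈ closure W := by
    rw [mem_closure_iff_nhds]
    intro U hU
    rw [nhds_pi] at hU
    rw [Filter.mem_pi] at hU
    obtain ⟨I, hIfin, t, ht, hsub⟩ := hU
    obtain ⟨n, hn⟩ := hIfin.bddAbove
    obtain ⟨w, hwW, hw⟩ := H (n + 1)
    refine ⟨w, hsub fun i hi => ?_, hwW⟩
    have : w i = ρ i := hw i (by have := hn hi; omega)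
    rw [this]
    have := ht i
    rwa [nhds_discrete, Filter.mem_pure] at this
  rwa [hW'.closure_eq] at this

section WPO
variable {A B : Type} (W : Set (ℕ → A × B))
variable (hwpo : ∀ h : ℕ → List (A × B), (∀ n, h n ∈ Gamma W) →
      ∃ k l : ℕ, k < l ∧ WinAfter W (h k) ⊆ WinAfter W (h l))

def Res : Set (Set (ℕ → A × B)) := {S | ∃ h ∈ Gamma W, WinAfter W h = S}

include hwpo in
lemma exists_min (S : Set (ℕ → A × B)) (hS : S ∈ Res W) :
    ∃ m, (m ∈ Res W ∧ ∀ T ∈ Res W, T ⊆ m → T = m) ∧ m ⊆ S := by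
  by_contra hbad
  push_neg at hbad
  -- every element of Res below S has a strictly smaller element of Res below it
  have step : ∀ T : {T // T ∈ Res W ∧ T ⊆ S},
      ∃ T' : {T // T ∈ Res W ∧ T ⊆ S}, T'.1 ⊆ T.1 ∧ T'.1 ≠ T.1 := by
    rintro ⟨T, hT, hTS⟩
    have : ¬ (∀ T' ∈ Res W, T' ⊆ T → T' = T) := by
      intro hminT
      exact absurd hTS (hbad T ⟨hT, hminT⟩)
    push_neg at this
    obtain ⟨T', hT', hsub, hne⟩ := this
    exact ⟨⟨T', hT', hsub.trans hTS⟩, hsub, hne⟩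
  choose f hf1 hf2 using step
  let u : ℕ → {T // T ∈ Res W ∧ T ⊆ S} := fun n => f^[n] ⟨S, hS, subset_rfl⟩
  have hu_succ : ∀ n, u (n + 1) = f (u n) := fun n => Function.iterate_succ_apply' f n _
  have hmono : ∀ n m, n ≤ m → (u m).1 ⊆ (u n).1 := by
    intro n m hnm
    induction m with
    | zero => cases Nat.le_zero.mp hnm; exact subset_rfl
    | succ m ih =>
      rcases Nat.lt_or_ge n (m+1) with h | h
      · have := ih (by omega)
        rw [hu_succ]
        exact (hf1 (u m)).trans this
      · have : n = m + 1 := by omega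
        subst this; exact subset_rfl
  choose hh hhΓ hhW using fun n => (u n).2.1
  obtain ⟨k, l, hkl, hsub⟩ := hwpo hh hhΓ
  rw [hhW k, hhW l] at hsub
  have h1 : (u l).1 ⊆ (u (k+1)).1 := hmono _ _ (by omega)
  have h2 : (u (k+1)).1 ⊆ (u k).1 := by rw [hu_succ]; exact hf1 _
  have : (u (k+1)).1 = (u k).1 := subset_antisymm h2 ((hsub.trans h1))
  exact hf2 (u k) (by rw [← hu_succ]; exact this)

include hwpo in
lemma min_finite : {S | S ∈ Res W ∧ ∀ T ∈ Res W, T ⊆ S → T = S}.Finite := by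
  by_contra hinf
  rw [← Set.not_infinite, not_not] at hinf
  let e := hinf.natEmbedding
  choose hh hhΓ hhW using fun n => (e n).2.1
  obtain ⟨k, l, hkl, hsub⟩ := hwpo hh hhΓ
  rw [hhW k, hhW l] at hsub
  have : (e k).1 = (e l).1 := (e l).2.2 _ (e k).2.1 hsub
  have : e k = e l := Subtype.ext this
  exact absurd (e.injective this) (by omega)

end WPO


/-- If `W` is a closed set, inclusion induces a well partial order on the winning sets
induced by histories in `Γ`, and the empty history belongs to `Γ`, then Player 1 has a
finite-memory winning strategy from the empty history. -/
theorem statement7 {A B : Type} [Fintype A] [Fintype B] [Nonempty A] [Nonempty B]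
    (W : Set (ℕ → A × B)) (hW : IsClosed[seqTop (A × B)] W)
    (hwpo : ∀ h : ℕ → List (A × B), (∀ n, h n ∈ Gamma W) →
      ∃ k l : ℕ, k < l ∧ WinAfter W (h k) ⊆ WinAfter W (h l))
    (hε : ([] : List (A × B)) ∈ Gamma W) :
    ∃ s : List (A × B) → A, FiniteMemory s ∧ WinningFrom W s [] := by
  classical
  set Min := {S | S ∈ Res W ∧ ∀ T ∈ Res W, T ⊆ S → T = S} with hMin
  haveI : Fintype ↥Min := (min_finite W hwpo).fintype
  -- representative history for each minimal residual
  have hrep : ∀ m : ↥Min, ∃ h, h ∈ Gamma W ∧ WinAfter W h = m.1 := fun m => m.2.1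
  choose g hgΓ hgW using hrep
  -- non-losing action at each representative
  have hact : ∀ m : ↥Min, ∃ a, NonLosing W (g m) a :=
    fun m => exists_nonLosing W _ (gamma_winning W _ (hgΓ m))
  choose σ hσ using hact
  -- transitions
  have htrans : ∀ (m : ↥Min) (b : B),
      ∃ m' : ↥Min, m'.1 ⊆ WinAfter W (g m ++ [(σ m, b)]) := by
    intro m b
    have hmem : g m ++ [(σ m, b)] ∈ Gamma W := gamma_concat W _ _ _ (hgΓ m) (hσ m)
    obtain ⟨m', hm', hsub⟩ := exists_min W hwpo (WinAfter W (g m ++ [(σ m, b)])) ⟨_, hmem, rfl⟩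
    exact ⟨⟨m', hm'⟩, hsub⟩
  choose δ hδ using htrans
  -- initial state
  obtain ⟨m₀s, hm₀R, hm₀sub⟩ := exists_min W hwpo (WinAfter W []) ⟨[], hε, rfl⟩
  set m₀ : ↥Min := ⟨m₀s, hm₀R⟩ with hm₀
  set μ : ↥Min → A × B → ↥Min := fun m c => δ m c.2 with hμ
  set s : List (A × B) → A := fun h => σ (h.foldl μ m₀) with hs
  refine ⟨s, ⟨↥Min, inferInstance, σ, μ, m₀, fun h => rfl⟩, ?_⟩
  intro β
  set P : ℕ → List (A × B) := fun n => outPrefix [] s β n with hP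
  have hPsucc : ∀ n, P (n + 1) = P n ++ [(s (P n), β n)] := fun n => rfl
  have hlen : ∀ n, (P n).length = n := by
    intro n; induction n with
    | zero => rfl
    | succ n ih => rw [hPsucc, List.length_append, ih]; rfl
  -- invariant: the current memory-state residual is below the actual residual
  have hinv : ∀ n, ((P n).foldl μ m₀).1 ⊆ WinAfter W (P n) := by
    intro n; induction n with
    | zero =>
      show m₀s ⊆ WinAfter W []
      exact hm₀sub
    | succ n ih =>
      rw [hPsucc, List.foldl_append]
      set m := (P n).foldl μ m₀ with hm
      have hsPn : s (P n) = σ m := rfl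
      show (δ m (β n)).1 ⊆ WinAfter W (P n ++ [(s (P n), β n)])
      refine (hδ m (β n)).trans ?_
      rw [hsPn, winAfter_concat, winAfter_concat]
      intro ρ hρ
      exact ih (by rw [← hgW m]; exact hρ)
  -- every finite prefix of the play extends to an element of W
  have hne : ∀ n, (WinAfter W (P n)).Nonempty := by
    intro n
    set m := (P n).foldl μ m₀ with hm
    have : (WinAfter W (g m)).Nonempty :=
      winAfter_nonempty W _ (gamma_winning W _ (hgΓ m))
    obtain ⟨ρ, hρ⟩ := this
    exact ⟨ρ, hinv n (by rw [← hgW m]; exact hρ)⟩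
  -- prefixes of the outcome
  have getP : ∀ n k (h1 : k < (P n).length), k < n → (P n)[k] = out [] s β k := by
    intro n
    induction n with
    | zero => intro k _ hk; omega
    | succ n ih =>
      intro k h1 hk
      rcases Nat.lt_or_ge k n with h2 | h2
      · rw [hPsucc] at h1
        show (P n ++ [(s (P n), β n)])[k]'h1 = out [] s β k
        rw [List.getElem_append_left (by rw [hlen]; exact h2)]
        exact ih k _ h2
      · have h3 : k = n := by omega
        subst h3
        rw [hPsucc] at h1
        show (P k ++ [(s (P k), β k)])[k]'h1 = out [] s β k
        rw [List.getElem_append_right (by rw [hlen])]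
        have : out [] s β k = (s (outPrefix [] s β k), β k) := by
          simp [out]
        rw [this]
        simp [hlen]
        rfl
    -- done
  refine mem_of_prefixes W hW _ fun n => ?_
  obtain ⟨ρ, hρ⟩ := hne n
  refine ⟨catSeq (P n) ρ, hρ, fun k hk => ?_⟩
  have hk' : k < (P n).length := by rw [hlen]; exact hk
  simp only [catSeq, List.get_eq_getElem]
  rw [dif_pos hk']
  exact getP n k hk' hk
end
end

section
/- For every nonzero ordinal θ, the collection Λ_θ of subsets of C^ω is closed under open union: if (S_i)_{i∈I} is a family of sets in Λ_θ and there exists a family of pairwise disjoint open sets (O_i)_{i∈I} with S_i ⊆ O_i for each i, then ∪_{i∈I} S_i ∈ Λ_θ. -/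
open Set Topology

noncomputable section

/-- Each level `Λ_θ` is closed under open union. -/
theorem statement16 (C : Type) (θ : Ordinal) (hθ : θ ≠ 0) (I : Type)
    (T O : I → Set (ℕ → C)) (hT : ∀ i, T i ∈ FineLambda C θ)
    (hopen : ∀ i, IsOpen[seqTop C] (O i))
    (hdisj : Pairwise fun i j => Disjoint (O i) (O j))
    (hsub : ∀ i, T i ⊆ O i) :
    (⋃ i, T i) ∈ FineLambda C θ := by
  rcases eq_or_ne θ 1 with h1 | h1
  · subst h1
    rw [FineLambda]
    simp only [if_pos rfl]
    refine @isOpen_iUnion _ _ (seqTop C) _ (fun i => ?_)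
    have := hT i; rw [FineLambda] at this; simpa using this
  · have hgt : 1 < θ := lt_of_le_of_ne (Ordinal.one_le_iff_ne_zero.mpr hθ) (Ne.symm h1)
    have key : ∀ i, ∃ (J : Type) (T' O' : J → Set (ℕ → C)) (η : J → {x : Ordinal // x < θ}),
        (∀ j, IsOpen[seqTop C] (O' j)) ∧ (Pairwise fun j k => Disjoint (O' j) (O' k)) ∧
        (∀ j, T' j ⊆ O' j) ∧ T i = ⋃ j, T' j ∧
        ∀ j, T' j ∈ FineLambda C (η j) ∨ (T' j)ᶜ ∈ FineLambda C (η j) := by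
      intro i
      have := hT i; rw [FineLambda, if_neg h1, if_pos hgt] at this; exact this
    choose J T' O' η hop hdis hsub' heq hmem using key
    rw [FineLambda, if_neg h1, if_pos hgt]
    refine ⟨Σ i, J i, fun p => T' p.1 p.2, fun p => O p.1 ∩ O' p.1 p.2,
      fun p => η p.1 p.2, ?_, ?_, ?_, ?_, fun p => hmem p.1 p.2⟩
    · exact fun p => @IsOpen.inter _ (seqTop C) _ _ (hopen p.1) (hop p.1 p.2)
    · rintro ⟨i, j⟩ ⟨i', j'⟩ hne
      rcases eq_or_ne i i' with rfl | hii
      · have hjj : j ≠ j' := fun h => hne (by rw [h])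
        exact Disjoint.mono inter_subset_right inter_subset_right (hdis i hjj)
      · exact Disjoint.mono inter_subset_left inter_subset_left (hdisj hii)
    · rintro ⟨i, j⟩
      exact subset_inter (fun x hx => hsub i ((heq i).symm ▸ mem_iUnion.2 ⟨j, hx⟩)) (hsub' i j)
    · rw [Set.iUnion_sigma]
      exact iUnion_congr heq
end
end

section
/- For every nonzero ordinal θ, if a subset S of C^ω belongs to K_θ, then there exist a closed set F ⊆ C^ω and a set L ∈ Λ_θ such that S = F ∪ L. -/
open Set Topology

noncomputable section

namespace Aux
variable {C : Type}

variable {C : Type}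

def cyl (w : List C) : Set (ℕ → C) := {ρ | ∀ i, (h : i < w.length) → ρ i = w[i]}

lemma mem_cyl_pref (ρ : ℕ → C) (n : ℕ) : ρ ∈ cyl (pref ρ n) := by
  intro i h
  simp [pref] at h ⊢

lemma pref_getElem (ρ : ℕ → C) (n i : ℕ) (h : i < (pref ρ n).length) : (pref ρ n)[i] = ρ i := by
  simp [pref]

lemma pref_length (ρ : ℕ → C) (n : ℕ) : (pref ρ n).length = n := by simp [pref]

lemma cyl_eq_iInter (w : List C) :
    cyl w = ⋂ i : Fin w.length, (fun ρ : ℕ → C => ρ i) ⁻¹' {w[(i:ℕ)]} := by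
  ext ρ; simp [cyl]; constructor
  · intro h i; exact h i i.2
  · intro h i hi; exact h ⟨i, hi⟩

lemma isOpen_eval (i : ℕ) (s : Set C) : IsOpen[seqTop C] ((fun ρ : ℕ → C => ρ i) ⁻¹' s) :=
  @Continuous.isOpen_preimage _ _ (seqTop C) ⊥
    (fun ρ : ℕ → C => ρ i) (@continuous_apply ℕ (fun _ => C) (fun _ => ⊥) i) s trivial

lemma isOpen_cyl (w : List C) : IsOpen[seqTop C] (cyl w) := by
  rw [cyl_eq_iInter]
  exact @isOpen_iInter_of_finite _ _ (seqTop C) _ _ fun i => isOpen_eval _ _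

lemma isClosed_cyl (w : List C) : IsClosed[seqTop C] (cyl w) := by
  have : IsOpen[seqTop C] (cyl w)ᶜ := by
    rw [cyl_eq_iInter, compl_iInter]
    refine @isOpen_iUnion _ _ (seqTop C) _ fun i => ?_
    rw [← preimage_compl]
    exact isOpen_eval _ _
  exact @IsClosed.mk _ (seqTop C) _ this

lemma eq_take_of_mem_cyl {ρ : ℕ → C} {w w' : List C} (hw : ρ ∈ cyl w) (hw' : ρ ∈ cyl w')
    (hle : w.length ≤ w'.length) : w = w'.take w.length := by
  apply List.ext_getElem (by simp; omega)
  intro i h1 h2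
  rw [List.getElem_take]
  rw [← hw i h1, ← hw' i (by omega)]


lemma exists_basic (U : Set (ℕ → C)) (hU : IsOpen[seqTop C] U) (ρ : ℕ → C) (hρ : ρ ∈ U) :
    ∃ n, cyl (pref ρ n) ⊆ U := by
  rw [seqTop, @isOpen_pi_iff ℕ (fun _ => C) (fun _ => ⊥)] at hU
  obtain ⟨I, u, h1, h2⟩ := hU ρ hρ
  rcases I.bddAbove with ⟨n, hn⟩
  refine ⟨n + 1, fun σ hσ => h2 ?_⟩
  intro i hi
  have hi' : i < n + 1 := Nat.lt_succ_of_le (hn hi)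
  have := hσ i (by rwa [pref_length])
  rw [pref_getElem] at this
  rw [this]
  exact (h1 i hi).2

/-- minimal words whose cylinder is inside U -/
def minWords (U : Set (ℕ → C)) : Set (List C) :=
  {w | cyl w ⊆ U ∧ ∀ m < w.length, ¬ cyl (w.take m) ⊆ U}

lemma pref_take (ρ : ℕ → C) (n m : ℕ) (h : m ≤ n) : (pref ρ n).take m = pref ρ m := by
  apply List.ext_getElem (by simp [pref]; omega)
  intro i h1 h2
  rw [List.getElem_take, pref_getElem, pref_getElem]

lemma minWords_cover (U : Set (ℕ → C)) (hU : IsOpen[seqTop C] U) :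
    ⋃ w : minWords U, cyl (w : List C) = U := by
  apply Set.Subset.antisymm
  · rintro ρ ⟨s, ⟨w, rfl⟩, hρ⟩
    exact w.2.1 hρ
  · intro ρ hρ
    have hex := exists_basic U hU ρ hρ
    classical
    let n := Nat.find hex
    refine mem_iUnion.2 ⟨⟨pref ρ n, ?_, ?_⟩, mem_cyl_pref ρ n⟩
    · exact Nat.find_spec hex
    · intro m hm
      rw [pref_length] at hm
      rw [pref_take ρ n m hm.le]
      exact Nat.find_min hex hm

lemma minWords_disjoint (U : Set (ℕ → C)) :
    Pairwise fun (w w' : minWords U) => Disjoint (cyl (w : List C)) (cyl (w' : List C)) := by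
  intro w w' hne
  rw [Set.disjoint_left]
  intro ρ hw hw'
  rcases le_total (w : List C).length (w' : List C).length with hle | hle
  · have heq := eq_take_of_mem_cyl hw hw' hle
    rcases lt_or_eq_of_le hle with hlt | hl
    · exact w'.2.2 (w : List C).length hlt (heq ▸ w.2.1)
    · apply hne; ext1; rw [heq, hl, List.take_length]
  · have heq := eq_take_of_mem_cyl hw' hw hle
    rcases lt_or_eq_of_le hle with hlt | hl
    · exact w.2.2 (w' : List C).length hlt (heq ▸ w'.2.1)
    · apply hne; ext1; rw [heq, hl, List.take_length]

lemma exists_clopen_partition (U : Set (ℕ → C)) (hU : IsOpen[seqTop C] U) :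
    ∃ (J : Type) (V : J → Set (ℕ → C)),
      (∀ j, IsOpen[seqTop C] (V j)) ∧ (∀ j, IsClosed[seqTop C] (V j)) ∧
      (Pairwise fun a b => Disjoint (V a) (V b)) ∧ ⋃ j, V j = U :=
  ⟨minWords U, fun w => cyl (w : List C), fun w => isOpen_cyl _, fun w => isClosed_cyl _,
    minWords_disjoint U, minWords_cover U hU⟩


variable {C : Type}

lemma isClosed_compl {V : Set (ℕ → C)} (h : IsOpen[seqTop C] V) : IsClosed[seqTop C] Vᶜ :=
  @IsClosed.mk _ (seqTop C) _ (by rwa [compl_compl])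

lemma isOpen_compl {V : Set (ℕ → C)} (h : IsClosed[seqTop C] V) : IsOpen[seqTop C] Vᶜ :=
  h.isOpen_compl

lemma oInter {A B : Set (ℕ → C)} (hA : IsOpen[seqTop C] A) (hB : IsOpen[seqTop C] B) :
    IsOpen[seqTop C] (A ∩ B) := by
  letI := seqTop C; exact hA.inter hB

lemma oUnion {A B : Set (ℕ → C)} (hA : IsOpen[seqTop C] A) (hB : IsOpen[seqTop C] B) :
    IsOpen[seqTop C] (A ∪ B) := by
  letI := seqTop C; exact hA.union hB

lemma oIUnion {ι : Type} {f : ι → Set (ℕ → C)} (h : ∀ i, IsOpen[seqTop C] (f i)) :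
    IsOpen[seqTop C] (⋃ i, f i) := by
  letI := seqTop C; exact isOpen_iUnion h

lemma clopen_closure (η : Ordinal) :
    ∀ (V : Set (ℕ → C)), IsOpen[seqTop C] V → IsClosed[seqTop C] V →
    (∀ A ∈ FineLambda C η, A ∪ V ∈ FineLambda C η) ∧
    (∀ A ∈ FineLambda C η, A ∩ V ∈ FineLambda C η) := by
  induction η using Ordinal.induction with
  | h η IH =>
  intro V hVo hVc
  by_cases h1 : η = 1
  · subst h1
    rw [FineLambda, if_pos rfl]
    exact ⟨fun A hA => oUnion hA hVo, fun A hA => oInter hA hVo⟩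
  by_cases h2 : 1 < η
  · rw [FineLambda, if_neg h1, if_pos h2]
    constructor
    · rintro A ⟨I, T, O, e, hO, hdis, hsub, hAeq, hmem⟩
      refine ⟨Option I, (fun o => match o with | none => V | some i => T i ∩ Vᶜ),
        (fun o => match o with | none => V | some i => O i ∩ Vᶜ),
        (fun o => match o with | none => ⟨1, h2⟩ | some i => e i), ?_, ?_, ?_, ?_, ?_⟩
      · rintro (_ | i)
        · exact hVo
        · exact oInter (hO i) (isOpen_compl hVc)
      · rintro (_ | i) (_ | j) hne
        · exact absurd rfl hne
        · exact Set.disjoint_left.2 fun ρ hρ hρ' => hρ'.2 hρ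
        · exact Set.disjoint_left.2 fun ρ hρ hρ' => hρ.2 hρ'
        · exact Disjoint.mono inter_subset_left inter_subset_left
            (hdis (by simp_all : i ≠ j))
      · rintro (_ | i)
        · exact subset_rfl
        · exact inter_subset_inter_left _ (hsub i)
      · ext ρ
        simp only [mem_union, mem_iUnion, hAeq]
        constructor
        · rintro (⟨i, hi⟩ | hV)
          · by_cases hv : ρ ∈ V
            · exact ⟨none, hv⟩
            · exact ⟨some i, hi, hv⟩
          · exact ⟨none, hV⟩
        · rintro ⟨(_ | i), hi⟩
          · exact Or.inr hi
          · exact Or.inl ⟨i, hi.1⟩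
      · rintro (_ | i)
        · left; rw [FineLambda]; exact if_pos rfl ▸ hVo
        · rcases hmem i with hT | hT
          · left
            exact (IH (e i) (e i).2 Vᶜ (isOpen_compl hVc) (isClosed_compl hVo)).2 _ hT
          · right
            rw [compl_inter, compl_compl]
            exact (IH (e i) (e i).2 V hVo hVc).1 _ hT
    · rintro A ⟨I, T, O, e, hO, hdis, hsub, hAeq, hmem⟩
      refine ⟨I, fun i => T i ∩ V, fun i => O i ∩ V, e, ?_, ?_, ?_, ?_, ?_⟩
      · exact fun i => oInter (hO i) hVo
      · exact fun i j hne => Disjoint.mono inter_subset_left inter_subset_left (hdis hne)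
      · exact fun i => inter_subset_inter_left _ (hsub i)
      · rw [hAeq, iUnion_inter]
      · intro i
        rcases hmem i with hT | hT
        · left
          exact (IH (e i) (e i).2 V hVo hVc).2 _ hT
        · right
          rw [compl_inter]
          exact (IH (e i) (e i).2 Vᶜ (isOpen_compl hVc) (isClosed_compl hVo)).1 _ hT
  · rw [FineLambda, if_neg h1, if_neg h2]
    exact ⟨fun A hA => absurd hA (notMem_empty A), fun A hA => absurd hA (notMem_empty A)⟩


end Aux

/-- Every set in `K_θ` is the union of a closed set and a set in `Λ_θ`. -/
theorem statement18 (C : Type) (θ : Ordinal) (hθ : θ ≠ 0) (S : Set (ℕ → C))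
    (hS : S ∈ FineK C θ) :
    ∃ (F L : Set (ℕ → C)), IsClosed[seqTop C] F ∧ L ∈ FineLambda C θ ∧ S = F ∪ L := by
  have hS' : Sᶜ ∈ FineLambda C θ := hS
  rcases eq_or_lt_of_le (Ordinal.one_le_iff_ne_zero.2 hθ) with h1 | h1
  · -- θ = 1
    subst h1
    rw [FineLambda, if_pos rfl] at hS'
    refine ⟨S, ∅, ?_, ?_, (union_empty S).symm⟩
    · exact @IsClosed.mk _ (seqTop C) _ hS'
    · rw [FineLambda, if_pos rfl]
      exact @isOpen_empty _ (seqTop C)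
  · -- 1 < θ
    rw [FineLambda, if_neg h1.ne', if_pos h1] at hS'
    obtain ⟨I, T, O, e, hO, hdis, hsub, heq, hmem⟩ := hS'
    choose J V hVo hVc hVdis hVU using fun i => Aux.exists_clopen_partition (O i) (hO i)
    refine ⟨(⋃ i, O i)ᶜ, ⋃ i, O i ∩ (T i)ᶜ, ?_, ?_, ?_⟩
    · exact Aux.isClosed_compl (Aux.oIUnion hO)
    · rw [FineLambda, if_neg h1.ne', if_pos h1]
      refine ⟨(Σ i, J i), fun p => V p.1 p.2 ∩ (T p.1)ᶜ, fun p => V p.1 p.2,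
        fun p => e p.1, fun p => hVo p.1 p.2, ?_, fun p => inter_subset_left, ?_, ?_⟩
      · rintro ⟨i, a⟩ ⟨j, b⟩ hne
        by_cases hij : i = j
        · subst hij
          have hab : a ≠ b := fun h => hne (by rw [h])
          exact hVdis i hab
        · have h1 : V i a ⊆ O i := (hVU i) ▸ subset_iUnion (V i) a
          have h2 : V j b ⊆ O j := (hVU j) ▸ subset_iUnion (V j) b
          exact Disjoint.mono h1 h2 (hdis hij)
      · rw [Set.iUnion_sigma]
        refine iUnion_congr fun i => ?_
        rw [← hVU i, iUnion_inter]
      · rintro ⟨i, a⟩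
        show V i a ∩ (T i)ᶜ ∈ FineLambda C (e i : Ordinal) ∨
          (V i a ∩ (T i)ᶜ)ᶜ ∈ FineLambda C (e i : Ordinal)
        rcases hmem i with hT | hT
        · right
          have hc : (V i a ∩ (T i)ᶜ)ᶜ = T i ∪ (V i a)ᶜ := by
            rw [compl_inter, compl_compl, union_comm]
          rw [hc]
          exact (Aux.clopen_closure (e i) ((V i a)ᶜ) (Aux.isOpen_compl (hVc i a))
            (Aux.isClosed_compl (hVo i a))).1 _ hT
        · left
          rw [inter_comm]
          exact (Aux.clopen_closure (e i) (V i a) (hVo i a) (hVc i a)).2 _ hT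
    · ext ρ
      simp only [mem_union, mem_compl_iff, mem_iUnion, mem_inter_iff]
      have hSc : ∀ ρ', ρ' ∈ Sᶜ ↔ ∃ i, ρ' ∈ T i := fun ρ' => by
        rw [heq]; exact mem_iUnion
      constructor
      · intro hρ
        by_cases hOex : ∃ i, ρ ∈ O i
        · obtain ⟨i, hi⟩ := hOex
          refine Or.inr ⟨i, hi, fun hT => ?_⟩
          exact (hSc ρ).2 ⟨i, hT⟩ hρ
        · exact Or.inl hOex
      · rintro (hF | ⟨i, hOi, hTi⟩) <;> by_contra h
        · obtain ⟨j, hj⟩ := (hSc ρ).1 h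
          exact hF ⟨j, hsub j hj⟩
        · obtain ⟨j, hj⟩ := (hSc ρ).1 h
          by_cases hij : j = i
          · exact hTi (hij ▸ hj)
          · exact (Set.disjoint_left.1 (hdis hij)) (hsub j hj) hOi

end
end

section
/- For every limit ordinal θ, a subset S of C^ω belongs to 𝒟_θ if and only if S can be written as an open union S = ⩁_{i∈I} S_i where for each i there exists a nonzero ordinal θ_i < θ with S_i ∈ 𝒟_{θ_i}. -/
open Set Topology

noncomputable section

/-! ### Auxiliary lemmas on ordinal parity -/

lemma ordRep (θ : Ordinal) : ∃ (lam : Ordinal) (n : ℕ),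
    (lam = 0 ∨ Order.IsSuccLimit lam) ∧ θ = lam + (n : Ordinal) := by
  obtain ⟨n, hn⟩ := Ordinal.lt_omega0.1 (Ordinal.mod_lt θ Ordinal.omega0_ne_zero)
  refine ⟨Ordinal.omega0 * (θ / Ordinal.omega0), n, ?_, ?_⟩
  · rcases eq_or_ne (θ / Ordinal.omega0) 0 with h | h
    · left; simp [h]
    · right
      exact Ordinal.isSuccLimit_mul_left Ordinal.isSuccLimit_omega0 (pos_iff_ne_zero.2 h)
  · rw [← hn, Ordinal.div_add_mod]

lemma limit_add_nat_lt {θ η : Ordinal} (hθ : Order.IsSuccLimit θ) (h : η < θ) (n : ℕ) :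
    η + (n : Ordinal) < θ := by
  induction n with
  | zero => simpa using h
  | succ m ih =>
      have : η + ((m + 1 : ℕ) : Ordinal) = (η + m) + 1 := by
        push_cast; rw [add_assoc]
      rw [this]
      exact hθ.succ_lt ih

lemma rep_inj {lam lam' : Ordinal} {m n : ℕ}
    (h : lam = 0 ∨ Order.IsSuccLimit lam) (h' : lam' = 0 ∨ Order.IsSuccLimit lam')
    (he : lam + (m : Ordinal) = lam' + (n : Ordinal)) : m = n := by
  have key : ∀ (a b : Ordinal) (p q : ℕ), (a = 0 ∨ Order.IsSuccLimit a) → (b = 0 ∨ Order.IsSuccLimit b) →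
      a ≤ b → a + (p : Ordinal) = b + (q : Ordinal) → p = q := by
    intro a b p q ha hb hab he
    rcases eq_or_lt_of_le hab with rfl | hlt
    · exact_mod_cast (add_left_cancel_iff (a := a)).1 he
    · rcases hb with rfl | hb
      · exact absurd hlt (by simp)
      · have h1 : a + (p : Ordinal) < b := limit_add_nat_lt hb hlt p
        have h2 : b ≤ b + (q : Ordinal) := le_self_add
        rw [he] at h1
        exact absurd (h2.trans_lt h1) (lt_irrefl _)
  rcases le_total lam lam' with hle | hle
  · exact key _ _ _ _ h h' hle he
  · exact (key _ _ _ _ h' h hle he.symm).symm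

lemma ordEven_add_nat {lam : Ordinal} (h : lam = 0 ∨ Order.IsSuccLimit lam) (n : ℕ) :
    OrdEven (lam + (n : Ordinal)) ↔ Even n := by
  constructor
  · rintro ⟨l, k, hl, he⟩
    have : (2 : Ordinal) * (k : Ordinal) = ((2 * k : ℕ) : Ordinal) := by push_cast; ring_nf
    rw [this] at he
    have := rep_inj h hl he
    exact this ▸ even_two_mul k
  · rintro ⟨r, hr⟩
    refine ⟨lam, r, h, ?_⟩
    have h2 : (2 : Ordinal) * (r : Ordinal) = ((2 * r : ℕ) : Ordinal) := by
      push_cast; ring_nf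
    rw [h2, hr]
    congr 1
    exact congrArg _ (by omega)

lemma ordEven_limit {θ : Ordinal} (hθ : Order.IsSuccLimit θ) : OrdEven θ :=
  ⟨θ, 0, Or.inr hθ, by simp⟩

/-! ### Auxiliary lemmas on the topology of `C^ω` -/

def Cyl {C : Type} (w : List C) : Set (ℕ → C) :=
  {ρ | ∀ i : Fin w.length, ρ i = w.get i}

lemma isOpen_cyl_s19 {C : Type} (w : List C) : IsOpen[seqTop C] (Cyl w) := by
  letI : TopologicalSpace C := ⊥
  show IsOpen (Cyl w)
  have : Cyl w = ⋂ i : Fin w.length, (fun ρ : ℕ → C => ρ i) ⁻¹' {w.get i} := by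
    ext ρ; simp [Cyl]
  rw [this]
  exact isOpen_iInter_of_finite fun i =>
    (continuous_apply (i : ℕ)).isOpen_preimage _ trivial

lemma mem_cyl_self_s19 {C : Type} (ρ : ℕ → C) (n : ℕ) :
    ρ ∈ Cyl ((List.range n).map ρ) := by
  intro i
  have hi : (i : ℕ) < n := by simpa using i.2
  simp [List.get_eq_getElem]

lemma cyl_nbhd {C : Type} {U : Set (ℕ → C)} (hU : IsOpen[seqTop C] U)
    {ρ : ℕ → C} (hρ : ρ ∈ U) : ∃ n : ℕ, Cyl ((List.range n).map ρ) ⊆ U := by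
  letI : TopologicalSpace C := ⊥
  have hU' : IsOpen U := hU
  obtain ⟨I, u, h1, h2⟩ := isOpen_pi_iff.1 hU' ρ hρ
  refine ⟨I.sup id + 1, fun σ hσ => h2 ?_⟩
  intro i hi
  have hlen : (((List.range (I.sup id + 1)).map ρ).length) = I.sup id + 1 := by simp
  have hilt : i < I.sup id + 1 := Nat.lt_succ_of_le (Finset.le_sup (f := id) hi)
  have := hσ ⟨i, by simpa [hlen] using hilt⟩
  simp only [List.get_eq_getElem, List.getElem_map, List.getElem_range] at this
  rw [this]
  exact (h1 i hi).2

lemma isOpen_inter' {C : Type} {U V : Set (ℕ → C)}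
    (h1 : IsOpen[seqTop C] U) (h2 : IsOpen[seqTop C] V) : IsOpen[seqTop C] (U ∩ V) := by
  letI : TopologicalSpace (ℕ → C) := seqTop C
  exact IsOpen.inter h1 h2

lemma isOpen_iUnion' {C : Type} {ι : Sort*} {f : ι → Set (ℕ → C)}
    (h : ∀ i, IsOpen[seqTop C] (f i)) : IsOpen[seqTop C] (⋃ i, f i) := by
  letI : TopologicalSpace (ℕ → C) := seqTop C
  exact isOpen_iUnion h

lemma take_pref {C : Type} (ρ : ℕ → C) (n m : ℕ) (h : m ≤ n) :
    ((List.range n).map ρ).take m = (List.range m).map ρ := by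
  rw [← List.map_take, List.take_range, Nat.min_eq_left h]

lemma cyl_pref_eq {C : Type} {ρ : ℕ → C} {w : List C} (h : ρ ∈ Cyl w) :
    w = (List.range w.length).map ρ := by
  apply List.ext_getElem (by simp)
  intro i h1 h2
  have := h ⟨i, h1⟩
  simp only [List.get_eq_getElem] at this
  simp [← this]

lemma piece_eq {C : Type} {θ θi η : Ordinal} (O : Ordinal → Set (ℕ → C)) (w : List C)
    (hη : η < θi) (hθi : θi < θ) (hsub : Cyl w ⊆ O η)
    (hevθ : OrdEven θ) (hevθi : OrdEven θi) :
    HDiffSet θ O ∩ Cyl w = HDiffSet θi (fun ξ => O ξ ∩ Cyl w) := by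
  ext ρ
  constructor
  · rintro ⟨⟨⟨ξ₀, hξ₀, hρξ₀⟩, hpar⟩, hcyl⟩
    set A := {ξ | ξ < θ ∧ ρ ∈ O ξ} with hAdef
    have hηA : η ∈ A := ⟨hη.trans hθi, hsub hcyl⟩
    have hinfA : sInf A ∈ A := csInf_mem ⟨η, hηA⟩
    have hlt : sInf A < θi := lt_of_le_of_lt (csInf_le' hηA) hη
    set B := {ξ | ξ < θi ∧ ρ ∈ O ξ ∩ Cyl w} with hBdef
    have hBA : sInf A ∈ B := ⟨hlt, hinfA.2, hcyl⟩
    have hBsubA : B ⊆ A := fun ξ hξ => ⟨hξ.1.trans hθi, hξ.2.1⟩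
    have hinf : sInf B = sInf A :=
      le_antisymm (csInf_le' hBA) (le_csInf ⟨_, hBA⟩ fun ξ hξ => csInf_le' (hBsubA hξ))
    refine ⟨⟨sInf A, hlt, hBA.2⟩, ?_⟩
    rw [show {ξ | ξ < θi ∧ ρ ∈ O ξ ∩ Cyl w} = B from rfl, hinf]
    simp only [hevθ, not_true_eq_false, iff_false] at hpar
    simp [hpar, hevθi]
  · rintro ⟨⟨ξ₀, hξ₀, hρξ₀, hcyl⟩, hpar⟩
    set A := {ξ | ξ < θ ∧ ρ ∈ O ξ} with hAdef
    have hηA : η ∈ A := ⟨hη.trans hθi, hsub hcyl⟩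
    have hinfA : sInf A ∈ A := csInf_mem ⟨η, hηA⟩
    have hlt : sInf A < θi := lt_of_le_of_lt (csInf_le' hηA) hη
    set B := {ξ | ξ < θi ∧ ρ ∈ O ξ ∩ Cyl w} with hBdef
    have hBA : sInf A ∈ B := ⟨hlt, hinfA.2, hcyl⟩
    have hBsubA : B ⊆ A := fun ξ hξ => ⟨hξ.1.trans hθi, hξ.2.1⟩
    have hinf : sInf B = sInf A :=
      le_antisymm (csInf_le' hBA) (le_csInf ⟨_, hBA⟩ fun ξ hξ => csInf_le' (hBsubA hξ))
    rw [hinf] at hpar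
    refine ⟨⟨⟨ξ₀, hξ₀.trans hθi, hρξ₀⟩, ?_⟩, hcyl⟩
    simp only [hevθi, not_true_eq_false, iff_false] at hpar
    simp [hpar, hevθ]
    exact hpar

/-- For a limit ordinal `θ`, a set belongs to `𝒟_θ` iff it is an open union of sets
belonging to levels `𝒟_{θ_i}` with `θ_i` nonzero, `θ_i < θ`. -/
theorem statement19 (C : Type) (θ : Ordinal) (hθ : Order.IsSuccLimit θ) (S : Set (ℕ → C)) :
    S ∈ Dclass C θ ↔
      ∃ (I : Type) (T O : I → Set (ℕ → C)),
        (∀ i, IsOpen[seqTop C] (O i)) ∧ (Pairwise fun i j => Disjoint (O i) (O j)) ∧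
        (∀ i, T i ⊆ O i) ∧ S = ⋃ i, T i ∧
        ∀ i, ∃ θi : Ordinal, θi ≠ 0 ∧ θi < θ ∧ T i ∈ Dclass C θi := by
  have hevθ : OrdEven θ := ordEven_limit hθ
  classical
  constructor
  · rintro ⟨O, hOopen, hOmono, rfl⟩
    set good : List C → Prop := fun w => ∃ η < θ, Cyl w ⊆ O η with hgood
    refine ⟨{w : List C // good w ∧ ∀ m < w.length, ¬ good (w.take m)},
      fun i => HDiffSet θ O ∩ Cyl i.1, fun i => Cyl i.1,
      fun i => isOpen_cyl_s19 _, ?_, fun i => inter_subset_right, ?_, ?_⟩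
    · -- pairwise disjointness of the cylinders
      intro i j hij
      rw [Set.disjoint_left]
      intro ρ hρi hρj
      apply hij
      apply Subtype.ext
      have key : ∀ (u v : List C), ρ ∈ Cyl u → ρ ∈ Cyl v →
          (good u ∧ ∀ m < u.length, ¬ good (u.take m)) →
          (good v ∧ ∀ m < v.length, ¬ good (v.take m)) → u.length ≤ v.length → u = v := by
        intro u v hu hv hmu hmv hle
        rcases eq_or_lt_of_le hle with heq | hlt
        · rw [cyl_pref_eq hu, cyl_pref_eq hv, heq]
        · exfalso
          apply hmv.2 u.length hlt
          have htake : v.take u.length = u := by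
            rw [cyl_pref_eq hv, take_pref ρ _ _ (le_of_lt hlt), ← cyl_pref_eq hu]
          rw [htake]; exact hmu.1
      rcases le_total i.1.length j.1.length with h | h
      · exact key _ _ hρi hρj i.2 j.2 h
      · exact (key _ _ hρj hρi j.2 i.2 h).symm
    · -- the union equals the original set
      ext ρ
      simp only [mem_iUnion, mem_inter_iff]
      constructor
      · intro hρ
        obtain ⟨η, hη, hρη⟩ := hρ.1
        have hex : ∃ n, good ((List.range n).map ρ) := by
          obtain ⟨n, hn⟩ := cyl_nbhd (hOopen η hη) hρη
          exact ⟨n, η, hη, hn⟩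
        refine ⟨⟨(List.range (Nat.find hex)).map ρ, Nat.find_spec hex, ?_⟩, hρ,
          mem_cyl_self_s19 ρ (Nat.find hex)⟩
        intro m hm
        have hmlt : m < Nat.find hex := by simpa using hm
        rw [take_pref ρ _ m (le_of_lt hmlt)]
        exact Nat.find_min hex hmlt
      · rintro ⟨i, h1, _⟩; exact h1
    · -- each piece is at a lower level
      rintro ⟨w, ⟨η, hη, hsub⟩, hmin⟩
      obtain ⟨θi, hev, hηθi, hθiθ, hθi0⟩ :
          ∃ θi, OrdEven θi ∧ η < θi ∧ θi < θ ∧ θi ≠ 0 := by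
        have hη1 : η < η + 1 := by
          rw [Ordinal.add_one_eq_succ]; exact Order.lt_succ η
        have hη1θ : η + 1 < θ := by
          rw [Ordinal.add_one_eq_succ]; exact hθ.succ_lt hη
        by_cases hc : OrdEven (η + 1)
        · exact ⟨η + 1, hc, hη1, hη1θ,
            (lt_of_le_of_lt (zero_le (a := η)) hη1).ne'⟩
        · have hc2 : OrdEven (η + 1 + 1) := (ordEven_succ (η + 1)).2 hc
          have h11 : η + 1 < η + 1 + 1 := by
            rw [Ordinal.add_one_eq_succ (o := η + 1)]; exact Order.lt_succ _
          refine ⟨η + 1 + 1, hc2, hη1.trans h11, ?_,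
            (lt_of_le_of_lt (zero_le (a := η + 1)) h11).ne'⟩
          rw [Ordinal.add_one_eq_succ (o := η + 1)]
          exact hθ.succ_lt hη1θ
      refine ⟨θi, hθi0, hθiθ, fun ξ => O ξ ∩ Cyl w, ?_, ?_, ?_⟩
      · intro ξ hξ
        exact isOpen_inter' (hOopen ξ (hξ.trans hθiθ)) (isOpen_cyl_s19 w)
      · intro ξ₁ ξ₂ h12 h2
        exact inter_subset_inter (hOmono ξ₁ ξ₂ h12 (h2.trans hθiθ)) subset_rfl
      · exact piece_eq O w hηθi hθiθ hsub hevθ hev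
  · rintro ⟨I, T, O, hOopen, hdisj, hTO, rfl, hlev⟩
    choose θi hθi0 hθilt hmem using hlev
    simp only [Dclass, mem_setOf_eq] at hmem
    choose F hFopen hFmono hTeq using hmem
    set s : I → Ordinal := fun i => if OrdEven (θi i) then 0 else 1 with hs
    have hs1 : ∀ i, s i ≤ 1 := by
      intro i; by_cases h : OrdEven (θi i) <;> simp [hs, h]
    set U : Ordinal → Set (ℕ → C) :=
      fun η => ⋃ i, (O i ∩ ⋃ ξ ∈ {ξ | ξ < θi i ∧ ξ + s i ≤ η}, F i ξ) with hU
    have hUmem : ∀ (η : Ordinal) (ρ : ℕ → C), ρ ∈ U η ↔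
        ∃ i, ρ ∈ O i ∧ ∃ ξ, ξ < θi i ∧ ξ + s i ≤ η ∧ ρ ∈ F i ξ := by
      intro η ρ
      simp only [hU, mem_iUnion, mem_inter_iff, mem_setOf_eq, exists_prop]
      tauto
    refine ⟨U, ?_, ?_, ?_⟩
    · intro η hη
      apply isOpen_iUnion'
      intro i
      apply isOpen_inter' (hOopen i)
      apply isOpen_iUnion'
      intro ξ
      apply isOpen_iUnion'
      intro hξ
      exact hFopen i ξ hξ.1
    · intro η₁ η₂ h12 h2 ρ hρ
      rw [hUmem] at hρ ⊢
      obtain ⟨i, hOi, ξ, h1, h2', h3⟩ := hρ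
      exact ⟨i, hOi, ξ, h1, h2'.trans h12, h3⟩
    · ext ρ
      simp only [mem_iUnion]
      by_cases hO : ∃ i, ρ ∈ O i
      · obtain ⟨i₀, hi₀⟩ := hO
        have huniq : ∀ j, ρ ∈ O j → j = i₀ := by
          intro j hj
          by_contra hne
          exact Set.disjoint_left.mp (hdisj hne) hj hi₀
        have hTiff : (∃ i, ρ ∈ T i) ↔ ρ ∈ T i₀ :=
          ⟨fun ⟨j, hj⟩ => (huniq j (hTO j hj)) ▸ hj, fun h => ⟨i₀, h⟩⟩
        have hU' : ∀ η, ρ ∈ U η ↔ ∃ ξ, ξ < θi i₀ ∧ ξ + s i₀ ≤ η ∧ ρ ∈ F i₀ ξ := by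
          intro η
          rw [hUmem]
          constructor
          · rintro ⟨j, hj, hex⟩
            exact huniq j hj ▸ hex
          · intro hex
            exact ⟨i₀, hi₀, hex⟩
        rw [hTiff, hTeq i₀]
        simp only [HDiffSet, mem_setOf_eq]
        by_cases hBne : {ξ | ξ < θi i₀ ∧ ρ ∈ F i₀ ξ}.Nonempty
        · have hβ := csInf_mem hBne
          set β := sInf {ξ | ξ < θi i₀ ∧ ρ ∈ F i₀ ξ} with hβdef
          obtain ⟨hβ1, hβ2⟩ := hβ
          have hUchar : ∀ η, ρ ∈ U η ↔ β + s i₀ ≤ η := by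
            intro η
            rw [hU']
            constructor
            · rintro ⟨ξ, h1, h2, h3⟩
              have hle : β ≤ ξ :=
                csInf_le' (show ξ ∈ {ξ | ξ < θi i₀ ∧ ρ ∈ F i₀ ξ} from ⟨h1, h3⟩)
              exact le_trans (add_le_add_left hle (s i₀)) h2
            · intro h
              exact ⟨β, hβ1, h, hβ2⟩
          have hβθ : β + s i₀ < θ := by
            have h1 : β + s i₀ ≤ β + 1 := add_le_add_right (hs1 i₀) β
            have h2 : β + 1 < θ := by
              rw [Ordinal.add_one_eq_succ]
              exact hθ.succ_lt (hβ1.trans (hθilt i₀))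
            exact lt_of_le_of_lt h1 h2
          have hAinf : sInf {η | η < θ ∧ ρ ∈ U η} = β + s i₀ := by
            apply le_antisymm
            · exact csInf_le' ⟨hβθ, (hUchar _).2 le_rfl⟩
            · exact le_csInf ⟨_, ⟨hβθ, (hUchar _).2 le_rfl⟩⟩ fun η hη => (hUchar η).1 hη.2
          have hparity : (OrdEven β ↔ ¬ OrdEven (θi i₀)) ↔ ¬ OrdEven (β + s i₀) := by
            by_cases h : OrdEven (θi i₀)
            · have hsi : s i₀ = 0 := if_pos h
              rw [hsi, add_zero]
              simp [h]
            · have hsi : s i₀ = 1 := if_neg h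
              rw [hsi, ordEven_succ]
              constructor
              · intro hiff hn
                exact hn (hiff.2 h)
              · intro hnn
                exact ⟨fun _ => h, fun _ => by_contra fun hβe => hnn hβe⟩
          constructor
          · rintro ⟨-, hpar⟩
            refine ⟨⟨β + s i₀, hβθ, (hUchar _).2 le_rfl⟩, ?_⟩
            rw [hAinf]
            simp only [hevθ, not_true_eq_false, iff_false]
            exact hparity.1 hpar
          · rintro ⟨-, hpar⟩
            refine ⟨⟨β, hβ1, hβ2⟩, ?_⟩
            rw [hAinf] at hpar
            simp only [hevθ, not_true_eq_false, iff_false] at hpar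
            exact hparity.2 hpar
        · have h1 : ¬ ∃ η < θi i₀, ρ ∈ F i₀ η := by
            rintro ⟨η, h, hF⟩
            exact hBne ⟨η, h, hF⟩
          have h2 : ¬ ∃ η < θ, ρ ∈ U η := by
            rintro ⟨η, h, hUη⟩
            rw [hU'] at hUη
            obtain ⟨ξ, a, b, c⟩ := hUη
            exact hBne ⟨ξ, a, c⟩
          simp [h1, h2]
      · constructor
        · rintro ⟨i, hi⟩
          exact absurd ⟨i, hTO i hi⟩ hO
        · rintro ⟨⟨η, hη, hρη⟩, -⟩
          rw [hUmem] at hρη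
          obtain ⟨i, hi, -⟩ := hρη
          exact absurd ⟨i, hi⟩ hO
end
end
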